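/- arXiv:2604.20031 — 8 statements merged into one kernel-verified Lean document; each statement's English description precedes it below -/
import Mathlib

section
/- Diameter-Lipschitzness of ξ_S(c − 2ĉ) − z⋆_S(c) in c: let S ⊆ ℝ^d be nonempty and compact with diameter D(S). Then for all c₁, c₂, ĉ ∈ ℝ^d, |(ξ_S(c₁ − 2ĉ) − z⋆_S(c₁)) − (ξ_S(c₂ − 2ĉ) − z⋆_S(c₂))| ≤ D(S) · ‖c₁ − c₂‖. -/
open scoped RealInnerProductSpace

/-- Support function of a set `S ⊆ ℝ^d`. -/
noncomputable def supp {d : ℕ} (S : Set (EuclideanSpace ℝ (Fin d)))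
    (u : EuclideanSpace ℝ (Fin d)) : ℝ :=
  sSup ((fun w => ⟪u, w⟫) '' S)

/-- Optimal value of the linear program over `S`. -/
noncomputable def zstar {d : ℕ} (S : Set (EuclideanSpace ℝ (Fin d)))
    (c : EuclideanSpace ℝ (Fin d)) : ℝ :=
  sInf ((fun w => ⟪c, w⟫) '' S)

lemma inner_cont {d : ℕ} (u : EuclideanSpace ℝ (Fin d)) :
    Continuous (fun w : EuclideanSpace ℝ (Fin d) => ⟪u, w⟫) :=
  Continuous.inner continuous_const continuous_id

lemma supp_exists {d : ℕ} (S : Set (EuclideanSpace ℝ (Fin d)))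
    (hne : S.Nonempty) (hcomp : IsCompact S) (u : EuclideanSpace ℝ (Fin d)) :
    ∃ w ∈ S, supp S u = ⟪u, w⟫ := by
  obtain ⟨w, hwS, hw⟩ := hcomp.exists_isMaxOn hne (inner_cont u).continuousOn
  refine ⟨w, hwS, le_antisymm ?_ ?_⟩
  · exact csSup_le (hne.image _) (by rintro _ ⟨y, hy, rfl⟩; exact hw hy)
  · exact le_csSup ((hcomp.image (inner_cont u)).bddAbove) ⟨w, hwS, rfl⟩

lemma zstar_exists {d : ℕ} (S : Set (EuclideanSpace ℝ (Fin d)))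
    (hne : S.Nonempty) (hcomp : IsCompact S) (c : EuclideanSpace ℝ (Fin d)) :
    ∃ v ∈ S, zstar S c = ⟪c, v⟫ := by
  obtain ⟨v, hvS, hv⟩ := hcomp.exists_isMinOn hne (inner_cont c).continuousOn
  refine ⟨v, hvS, le_antisymm ?_ ?_⟩
  · exact csInf_le ((hcomp.image (inner_cont c)).bddBelow) ⟨v, hvS, rfl⟩
  · exact le_csInf (hne.image _) (by rintro _ ⟨y, hy, rfl⟩; exact hv hy)

lemma supp_ge {d : ℕ} {S : Set (EuclideanSpace ℝ (Fin d))}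
    (hcomp : IsCompact S) {w : EuclideanSpace ℝ (Fin d)} (hw : w ∈ S)
    (u : EuclideanSpace ℝ (Fin d)) : ⟪u, w⟫ ≤ supp S u :=
  le_csSup ((hcomp.image (inner_cont u)).bddAbove) ⟨w, hw, rfl⟩

lemma zstar_le {d : ℕ} {S : Set (EuclideanSpace ℝ (Fin d))}
    (hcomp : IsCompact S) {v : EuclideanSpace ℝ (Fin d)} (hv : v ∈ S)
    (c : EuclideanSpace ℝ (Fin d)) : zstar S c ≤ ⟪c, v⟫ :=
  csInf_le ((hcomp.image (inner_cont c)).bddBelow) ⟨v, hv, rfl⟩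

lemma one_side {d : ℕ} (S : Set (EuclideanSpace ℝ (Fin d)))
    (hne : S.Nonempty) (hcomp : IsCompact S)
    (c₁ c₂ chat : EuclideanSpace ℝ (Fin d)) :
    (supp S (c₁ - (2 : ℝ) • chat) - zstar S c₁) -
      (supp S (c₂ - (2 : ℝ) • chat) - zstar S c₂) ≤
      Metric.diam S * ‖c₁ - c₂‖ := by
  obtain ⟨w, hwS, hw⟩ := supp_exists S hne hcomp (c₁ - (2 : ℝ) • chat)
  obtain ⟨v, hvS, hv⟩ := zstar_exists S hne hcomp c₁
  have h1 : ⟪c₂ - (2 : ℝ) • chat, w⟫ ≤ supp S (c₂ - (2 : ℝ) • chat) :=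
    supp_ge hcomp hwS _
  have h2 : zstar S c₂ ≤ ⟪c₂, v⟫ := zstar_le hcomp hvS _
  have key : (supp S (c₁ - (2 : ℝ) • chat) - zstar S c₁) -
      (supp S (c₂ - (2 : ℝ) • chat) - zstar S c₂) ≤ ⟪c₁ - c₂, w - v⟫ := by
    rw [hw, hv]
    have : ⟪c₁ - c₂, w - v⟫ = (⟪c₁ - (2 : ℝ) • chat, w⟫ - ⟪c₁, v⟫) -
        (⟪c₂ - (2 : ℝ) • chat, w⟫ - ⟪c₂, v⟫) := by
      simp [inner_sub_left, inner_sub_right]; ring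
    rw [this]
    have := sub_le_sub h2 h1
    linarith
  refine key.trans ?_
  calc ⟪c₁ - c₂, w - v⟫ ≤ ‖c₁ - c₂‖ * ‖w - v‖ := real_inner_le_norm _ _
    _ ≤ ‖c₁ - c₂‖ * Metric.diam S := by
        apply mul_le_mul_of_nonneg_left _ (norm_nonneg _)
        rw [← dist_eq_norm]
        exact Metric.dist_le_diam_of_mem hcomp.isBounded hwS hvS
    _ = Metric.diam S * ‖c₁ - c₂‖ := mul_comm _ _

/-- **Diameter-Lipschitzness of `ξ_S(c − 2ĉ) − z⋆_S(c)` in `c`.**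
For a nonempty compact `S ⊆ ℝ^d` with diameter `D(S)`, for all `c₁, c₂, ĉ`,
`|(ξ_S(c₁ − 2ĉ) − z⋆_S(c₁)) − (ξ_S(c₂ − 2ĉ) − z⋆_S(c₂))| ≤ D(S) ‖c₁ − c₂‖`. -/
theorem diameter_lipschitz_support_minus_zstar {d : ℕ}
    (S : Set (EuclideanSpace ℝ (Fin d)))
    (hne : S.Nonempty) (hcomp : IsCompact S)
    (c₁ c₂ chat : EuclideanSpace ℝ (Fin d)) :
    |(supp S (c₁ - (2 : ℝ) • chat) - zstar S c₁) -
      (supp S (c₂ - (2 : ℝ) • chat) - zstar S c₂)| ≤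
      Metric.diam S * ‖c₁ - c₂‖ := by
  rw [abs_sub_le_iff]
  constructor
  · exact one_side S hne hcomp c₁ c₂ chat
  · have := one_side S hne hcomp c₂ c₁ chat
    rwa [norm_sub_rev c₂ c₁] at this
end

section
/- Directional stability of support points under strong convexity: let S ⊆ ℝ^d be nonempty, compact, and ρ-strongly convex. Then for every pair of unit vectors p, q ∈ ℝ^d and every x_p ∈ S attaining max_{x∈S} ⟨p, x⟩ and every x_q ∈ S attaining max_{x∈S} ⟨q, x⟩, one has ‖x_p − x_q‖ ≤ ρ‖p − q‖ (in particular, taking p = q shows the maximizer is unique). Consequently, for any c₁, c₂ ∈ ℝ^d with c₁ ≠ 0 and c₂ ≠ 0, and any minimizers w₁ of ⟨c₁, ·⟩ and w₂ of ⟨c₂, ·⟩ over S, ‖w₁ − w₂‖ ≤ ρ‖c₁/‖c₁‖ − c₂/‖c₂‖‖. -/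
open scoped RealInnerProductSpace

/-- A set is `ρ`-strongly convex if it is an intersection of closed balls of radius `ρ`. -/
def StronglyConvexSet {d : ℕ} (ρ : ℝ) (S : Set (EuclideanSpace ℝ (Fin d))) : Prop :=
  ∃ X : Set (EuclideanSpace ℝ (Fin d)), S = ⋂ x ∈ X, Metric.closedBall x ρ

lemma key_mem {d : ℕ} {ρ : ℝ} (hρ : 0 < ρ) {S : Set (EuclideanSpace ℝ (Fin d))}
    (hsc : StronglyConvexSet ρ S) {y z : EuclideanSpace ℝ (Fin d)} (hy : y ∈ S) (hz : z ∈ S)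
    {u : EuclideanSpace ℝ (Fin d)} (hu : ‖u‖ = 1) {l : ℝ} (hl0 : 0 ≤ l) (hl1 : l ≤ 1) :
    l • y + (1 - l) • z + (l * (1 - l) * ‖y - z‖ ^ 2 / (2 * ρ)) • u ∈ S := by
  obtain ⟨X, rfl⟩ := hsc
  simp only [Set.mem_iInter, Metric.mem_closedBall] at hy hz ⊢
  intro x hx
  have ha := hy x hx
  have hb := hz x hx
  rw [dist_eq_norm] at ha hb ⊢
  set t : ℝ := l * (1 - l) * ‖y - z‖ ^ 2 / (2 * ρ) with ht
  have habs : l • y + (1 - l) • z + t • u - x = (l • (y - x) + (1 - l) • (z - x)) + t • u := by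
    module
  rw [habs]
  have e1 : ‖l • (y - x) + (1 - l) • (z - x)‖ ^ 2
      = l^2 * ‖y-x‖^2 + 2*(l*(1-l))*⟪y-x, z-x⟫ + (1-l)^2 * ‖z-x‖^2 := by
    rw [norm_add_sq_real, norm_smul, norm_smul, real_inner_smul_left, real_inner_smul_right,
      Real.norm_eq_abs, Real.norm_eq_abs, abs_of_nonneg hl0, abs_of_nonneg (by linarith : (0:ℝ) ≤ 1 - l)]
    ring
  have e2 : ‖y - z‖^2 = ‖y-x‖^2 - 2*⟪y-x,z-x⟫ + ‖z-x‖^2 := by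
    have hd : y - z = (y - x) - (z - x) := by abel
    rw [hd, norm_sub_sq_real]
  have h2ρt : 2 * ρ * t = l * (1-l) * ‖y-z‖^2 := by
    rw [ht]; field_simp
  have hkey : ‖l • (y - x) + (1 - l) • (z - x)‖ ^ 2 ≤ ρ^2 - 2 * ρ * t := by
    have hA : ‖y-x‖^2 ≤ ρ^2 := by nlinarith [norm_nonneg (y-x)]
    have hB : ‖z-x‖^2 ≤ ρ^2 := by nlinarith [norm_nonneg (z-x)]
    rw [e1, h2ρt, e2]
    nlinarith [mul_le_mul_of_nonneg_left hA hl0,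
      mul_le_mul_of_nonneg_left hB (by linarith : (0:ℝ) ≤ 1 - l)]
  have ht0 : 0 ≤ t := by
    rw [ht]
    apply div_nonneg _ (by linarith)
    exact mul_nonneg (mul_nonneg hl0 (by linarith)) (sq_nonneg _)
  have htρ : t ≤ ρ := by nlinarith [sq_nonneg ‖l • (y - x) + (1 - l) • (z - x)‖]
  have hc : ‖l • (y - x) + (1 - l) • (z - x)‖ ≤ ρ - t := by
    nlinarith [norm_nonneg (l • (y - x) + (1 - l) • (z - x))]
  calc ‖l • (y - x) + (1 - l) • (z - x) + t • u‖
      ≤ ‖l • (y - x) + (1 - l) • (z - x)‖ + ‖t • u‖ := norm_add_le _ _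
    _ ≤ (ρ - t) + t := by
        rw [norm_smul, hu]
        simp only [mul_one, Real.norm_eq_abs, abs_of_nonneg ht0]
        linarith
    _ = ρ := by ring

lemma support_ball {d : ℕ} {ρ : ℝ} (hρ : 0 < ρ) {S : Set (EuclideanSpace ℝ (Fin d))}
    (hsc : StronglyConvexSet ρ S) {p xp : EuclideanSpace ℝ (Fin d)} (hp : ‖p‖ = 1)
    (hxp : xp ∈ S) (hmax : ∀ x ∈ S, ⟪p, x⟫ ≤ ⟪p, xp⟫) :
    ∀ y ∈ S, ‖y - xp‖^2 ≤ 2 * ρ * ⟪p, xp - y⟫ := by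
  intro y hy
  set M : ℝ := ‖y - xp‖^2 / (2*ρ) with hM
  have hM0 : 0 ≤ M := div_nonneg (sq_nonneg _) (by linarith)
  have hstep : ∀ l : ℝ, 0 < l → l ≤ 1 → ⟪p, y - xp⟫ + M ≤ l * M := by
    intro l hl0 hl1
    have hmem := key_mem hρ hsc hy hxp hp hl0.le hl1
    have := hmax _ hmem
    have hexp : ⟪p, l • y + (1 - l) • xp + (l * (1 - l) * ‖y - xp‖ ^ 2 / (2 * ρ)) • p⟫
        = l * ⟪p, y⟫ + (1-l) * ⟪p, xp⟫ + l * (1-l) * ‖y - xp‖^2 / (2*ρ) := by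
      simp only [inner_add_right, inner_smul_right, real_inner_self_eq_norm_sq, hp]
      ring
    rw [hexp] at this
    have hinner : ⟪p, y - xp⟫ = ⟪p, y⟫ - ⟪p, xp⟫ := inner_sub_right _ _ _
    have hdiv : l * ⟪p, y - xp⟫ + l * ((1-l) * M) ≤ 0 := by
      rw [hinner, hM]
      have : l * (1 - l) * ‖y - xp‖ ^ 2 / (2 * ρ) = l * ((1-l) * (‖y - xp‖^2/(2*ρ))) := by ring
      nlinarith [this]
    have h5 : ⟪p, y - xp⟫ + (1-l)*M ≤ 0 := by nlinarith [hdiv]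
    linarith
  have hfin : ⟪p, y - xp⟫ + M ≤ 0 := by
    by_contra h
    push_neg at h
    set a := ⟪p, y - xp⟫ + M with hadef
    have hl : min (1/2) (a / (2*M + 2)) > 0 := by
      apply lt_min (by norm_num)
      positivity
    have hb := hstep _ hl (min_le_left _ _ |>.trans (by norm_num))
    have h1 : min (1/2) (a / (2*M + 2)) ≤ a / (2*M + 2) := min_le_right _ _
    have h2 : min (1/2) (a / (2*M + 2)) * M ≤ (a / (2*M + 2)) * M :=
      mul_le_mul_of_nonneg_right h1 hM0
    have h3 : (a / (2*M + 2)) * M < a := by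
      rw [div_mul_eq_mul_div, div_lt_iff₀ (by linarith)]
      nlinarith
    linarith
  have : M ≤ ⟪p, xp - y⟫ := by
    have : ⟪p, xp - y⟫ = - ⟪p, y - xp⟫ := by
      rw [← inner_neg_right]; congr 1; abel
    linarith [hfin, this.ge]
  calc ‖y - xp‖^2 = 2 * ρ * M := by rw [hM]; field_simp
    _ ≤ 2 * ρ * ⟪p, xp - y⟫ := by nlinarith

/-- **Directional stability of support points under strong convexity.**
For a nonempty compact `ρ`-strongly convex set: any maximizers of unit directions `p, q`
are within `ρ ‖p − q‖` of one another; consequently, minimizers of nonzero costs `c₁, c₂`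
are within `ρ ‖c₁/‖c₁‖ − c₂/‖c₂‖‖`. -/
theorem support_point_directional_stability {d : ℕ}
    (S : Set (EuclideanSpace ℝ (Fin d)))
    (hne : S.Nonempty) (hcomp : IsCompact S)
    (ρ : ℝ) (hρ : 0 < ρ) (hsc : StronglyConvexSet ρ S) :
    (∀ p q : EuclideanSpace ℝ (Fin d), ‖p‖ = 1 → ‖q‖ = 1 →
      ∀ xp ∈ S, (∀ x ∈ S, ⟪p, x⟫ ≤ ⟪p, xp⟫) →
      ∀ xq ∈ S, (∀ x ∈ S, ⟪q, x⟫ ≤ ⟪q, xq⟫) →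
      ‖xp - xq‖ ≤ ρ * ‖p - q‖) ∧
    (∀ c₁ c₂ : EuclideanSpace ℝ (Fin d), c₁ ≠ 0 → c₂ ≠ 0 →
      ∀ w₁ ∈ S, (∀ w ∈ S, ⟪c₁, w₁⟫ ≤ ⟪c₁, w⟫) →
      ∀ w₂ ∈ S, (∀ w ∈ S, ⟪c₂, w₂⟫ ≤ ⟪c₂, w⟫) →
      ‖w₁ - w₂‖ ≤ ρ * ‖‖c₁‖⁻¹ • c₁ - ‖c₂‖⁻¹ • c₂‖) := by
  have part1 : ∀ p q : EuclideanSpace ℝ (Fin d), ‖p‖ = 1 → ‖q‖ = 1 →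
      ∀ xp ∈ S, (∀ x ∈ S, ⟪p, x⟫ ≤ ⟪p, xp⟫) →
      ∀ xq ∈ S, (∀ x ∈ S, ⟪q, x⟫ ≤ ⟪q, xq⟫) →
      ‖xp - xq‖ ≤ ρ * ‖p - q‖ := by
    intro p q hp hq xp hxp hmaxp xq hxq hmaxq
    have h1 := support_ball hρ hsc hp hxp hmaxp xq hxq
    have h2 := support_ball hρ hsc hq hxq hmaxq xp hxp
    set v := xp - xq with hv
    have hrev : ‖xq - xp‖ = ‖v‖ := by rw [hv, norm_sub_rev]
    have hi1 : ⟪p, xp - xq⟫ = ⟪p, v⟫ := rfl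
    have hi2 : ⟪q, xq - xp⟫ = - ⟪q, v⟫ := by
      rw [← inner_neg_right]; congr 1; rw [hv]; abel
    rw [hrev, hi1] at h1
    rw [hi2] at h2
    have hcs : ⟪p - q, v⟫ ≤ ‖p - q‖ * ‖v‖ := real_inner_le_norm _ _
    have hsub : ⟪p - q, v⟫ = ⟪p, v⟫ - ⟪q, v⟫ := inner_sub_left _ _ _
    have hsq : ‖v‖^2 ≤ ρ * (‖p - q‖ * ‖v‖) := by nlinarith
    rcases eq_or_lt_of_le (norm_nonneg v) with h0 | h0
    · rw [← h0]
      positivity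
    · nlinarith
  refine ⟨part1, ?_⟩
  intro c₁ c₂ hc₁ hc₂ w₁ hw₁ hmin₁ w₂ hw₂ hmin₂
  have hn₁ : (0:ℝ) < ‖c₁‖ := norm_pos_iff.mpr hc₁
  have hn₂ : (0:ℝ) < ‖c₂‖ := norm_pos_iff.mpr hc₂
  set u₁ : EuclideanSpace ℝ (Fin d) := ‖c₁‖⁻¹ • c₁ with hu₁
  set u₂ : EuclideanSpace ℝ (Fin d) := ‖c₂‖⁻¹ • c₂ with hu₂
  have hnu₁ : ‖(-u₁ : EuclideanSpace ℝ (Fin d))‖ = 1 := by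
    rw [norm_neg, hu₁, norm_smul, norm_inv, norm_norm, inv_mul_cancel₀ hn₁.ne']
  have hnu₂ : ‖(-u₂ : EuclideanSpace ℝ (Fin d))‖ = 1 := by
    rw [norm_neg, hu₂, norm_smul, norm_inv, norm_norm, inv_mul_cancel₀ hn₂.ne']
  have hmax₁ : ∀ x ∈ S, ⟪-u₁, x⟫ ≤ ⟪-u₁, w₁⟫ := by
    intro x hx
    have := hmin₁ x hx
    simp only [hu₁, inner_neg_left, inner_smul_left, conj_trivial, neg_le_neg_iff]
    have h := mul_le_mul_of_nonneg_left this (inv_nonneg.mpr hn₁.le)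
    linarith
  have hmax₂ : ∀ x ∈ S, ⟪-u₂, x⟫ ≤ ⟪-u₂, w₂⟫ := by
    intro x hx
    have := hmin₂ x hx
    simp only [hu₂, inner_neg_left, inner_smul_left, conj_trivial, neg_le_neg_iff]
    have h := mul_le_mul_of_nonneg_left this (inv_nonneg.mpr hn₂.le)
    linarith
  have := part1 (-u₁) (-u₂) hnu₁ hnu₂ w₁ hw₁ hmax₁ w₂ hw₂ hmax₂
  have hnorm : ‖(-u₁ : EuclideanSpace ℝ (Fin d)) - (-u₂)‖ = ‖u₁ - u₂‖ := by
    rw [show (-u₁ : EuclideanSpace ℝ (Fin d)) - (-u₂) = -(u₁ - u₂) by abel, norm_neg]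
  rw [hnorm] at this
  exact this
end

section
/- Quadratic growth from curvature: let S ⊆ ℝ^d be nonempty, compact, and ρ-strongly convex. Fix a unit vector p ∈ ℝ^d and let x_S(p) ∈ S attain max_{x∈S} ⟨p, x⟩. Then for every x ∈ S, ξ_S(p) − ⟨p, x⟩ ≥ ‖x − x_S(p)‖² / (2ρ), where ξ_S(p) = max_{x∈S} ⟨p, x⟩. -/
open scoped RealInnerProductSpace

set_option maxHeartbeats 800000 in
/-- **Quadratic growth from curvature.**
For a nonempty compact `ρ`-strongly convex set `S`, a unit direction `p`, and a maximizer
`x_p` of `⟨p, ·⟩` over `S`: for every `x ∈ S`,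
`ξ_S(p) − ⟨p, x⟩ ≥ ‖x − x_p‖² / (2ρ)`. -/
theorem quadratic_growth_from_curvature {d : ℕ}
    (S : Set (EuclideanSpace ℝ (Fin d)))
    (hne : S.Nonempty) (hcomp : IsCompact S)
    (ρ : ℝ) (hρ : 0 < ρ) (hsc : StronglyConvexSet ρ S)
    (p : EuclideanSpace ℝ (Fin d)) (hp : ‖p‖ = 1)
    (xp : EuclideanSpace ℝ (Fin d)) (hxpmem : xp ∈ S)
    (hxpmax : ∀ x ∈ S, ⟪p, x⟫ ≤ ⟪p, xp⟫)
    (x : EuclideanSpace ℝ (Fin d)) (hx : x ∈ S) :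
    ‖x - xp‖ ^ 2 / (2 * ρ) ≤ supp S p - ⟪p, x⟫ := by
  have hsdef : supp S p = sSup ((fun w => ⟪p, w⟫) '' S) := rfl
  rw [hsdef]
  set r := ‖x - xp‖ with hr
  have hcont : Continuous fun w : EuclideanSpace ℝ (Fin d) => ⟪p, w⟫ :=
    continuous_const.inner continuous_id
  have hbdd : BddAbove ((fun w => ⟪p, w⟫) '' S) := (hcomp.image hcont).bddAbove
  have hsupp : ⟪p, xp⟫ ≤ sSup ((fun w => ⟪p, w⟫) '' S) :=
    le_csSup hbdd ⟨xp, hxpmem, rfl⟩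
  have hpp : ⟪p, p⟫ = 1 := by
    have := real_inner_self_eq_norm_sq p
    rw [hp] at this; simpa using this
  obtain ⟨X, hX⟩ := hsc
  have key : ∀ t : ℝ, 0 < t → t ≤ 1 → (1 - t) * (r ^ 2 / (2 * ρ)) ≤ ⟪p, xp⟫ - ⟪p, x⟫ := by
    intro t ht0 ht1
    have h1t : (0:ℝ) ≤ 1 - t := by linarith
    set γ : ℝ := t * (1 - t) * r ^ 2 / (2 * ρ) with hγ
    have hγ0 : 0 ≤ γ :=
      div_nonneg (mul_nonneg (mul_nonneg ht0.le h1t) (sq_nonneg r)) (by linarith)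
    set z := t • x + (1 - t) • xp + γ • p with hz
    have hzS : z ∈ S := by
      rw [hX]
      refine Set.mem_iInter₂.mpr fun c hc => ?_
      have hxc : ‖x - c‖ ≤ ρ := by
        have := Set.mem_iInter₂.mp (hX ▸ hx) c hc
        rwa [Metric.mem_closedBall, dist_eq_norm] at this
      have hxpc : ‖xp - c‖ ≤ ρ := by
        have := Set.mem_iInter₂.mp (hX ▸ hxpmem) c hc
        rwa [Metric.mem_closedBall, dist_eq_norm] at this
      rw [Metric.mem_closedBall, dist_eq_norm]
      set u := x - c with hu
      set v := xp - c with hv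
      have hzc : z - c = (t • u + (1 - t) • v) + γ • p := by
        rw [hz, hu, hv]; module
      have hruv : x - xp = u - v := by rw [hu, hv]; abel
      have hw2 : ‖t • u + (1 - t) • v‖ ^ 2
          = t ^ 2 * ‖u‖ ^ 2 + 2 * (t * (1 - t)) * ⟪u, v⟫ + (1 - t) ^ 2 * ‖v‖ ^ 2 := by
        rw [norm_add_sq_real, norm_smul, norm_smul, real_inner_smul_left,
          real_inner_smul_right]
        simp only [Real.norm_eq_abs, abs_of_nonneg ht0.le, abs_of_nonneg h1t]
        ring
      have hr2 : r ^ 2 = ‖u‖ ^ 2 - 2 * ⟪u, v⟫ + ‖v‖ ^ 2 := by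
        rw [hr, hruv, norm_sub_sq_real]
      have hrle : r ≤ 2 * ρ := by
        calc r = ‖u - v‖ := by rw [hr, hruv]
        _ ≤ ‖u‖ + ‖v‖ := norm_sub_le _ _
        _ ≤ 2 * ρ := by linarith
      have hr0 : 0 ≤ r := norm_nonneg _
      have hr4 : r ^ 2 ≤ 4 * ρ ^ 2 := by nlinarith
      have h14 : (0:ℝ) ≤ 1 / 4 - t * (1 - t) := by nlinarith [sq_nonneg (1 - 2 * t)]
      have hw0 : 0 ≤ ‖t • u + (1 - t) • v‖ := norm_nonneg _
      have hA : ‖u‖ ^ 2 ≤ ρ ^ 2 := by nlinarith [norm_nonneg u]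
      have hB : ‖v‖ ^ 2 ≤ ρ ^ 2 := by nlinarith [norm_nonneg v]
      have hwle : ‖t • u + (1 - t) • v‖ ^ 2 ≤ ρ ^ 2 - t * (1 - t) * r ^ 2 := by
        nlinarith [mul_nonneg ht0.le (sub_nonneg.mpr hA), mul_nonneg h1t (sub_nonneg.mpr hB)]
      have hγρ : γ ≤ ρ := by
        rw [hγ, div_le_iff₀ (by linarith : (0:ℝ) < 2 * ρ)]
        nlinarith [mul_nonneg h14 (sq_nonneg r)]
      have hργ : (0:ℝ) ≤ ρ - γ := by linarith
      have h2ργ : 2 * ρ * γ = t * (1 - t) * r ^ 2 := by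
        rw [hγ]; field_simp
      have hw2b : ‖t • u + (1 - t) • v‖ ^ 2 ≤ (ρ - γ) ^ 2 := by nlinarith [sq_nonneg γ]
      have hwle2 : ‖t • u + (1 - t) • v‖ ≤ ρ - γ := by
        nlinarith [hw2b, mul_nonneg hw0 hργ, mul_self_nonneg (‖t • u + (1 - t) • v‖ - (ρ - γ))]
      calc ‖z - c‖ ≤ ‖t • u + (1 - t) • v‖ + ‖γ • p‖ := by rw [hzc]; exact norm_add_le _ _
      _ = ‖t • u + (1 - t) • v‖ + γ := by rw [norm_smul, hp, Real.norm_eq_abs, abs_of_nonneg hγ0]; ring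
      _ ≤ ρ := by linarith
    have hmax := hxpmax z hzS
    have hpz : ⟪p, z⟫ = t * ⟪p, x⟫ + (1 - t) * ⟪p, xp⟫ + γ := by
      rw [hz, inner_add_right, inner_add_right, real_inner_smul_right,
        real_inner_smul_right, real_inner_smul_right, hpp]
      ring
    rw [hpz] at hmax
    have hγeq : γ = t * ((1 - t) * (r ^ 2 / (2 * ρ))) := by rw [hγ]; ring
    have hmul : t * ((1 - t) * (r ^ 2 / (2 * ρ))) ≤ t * (⟪p, xp⟫ - ⟪p, x⟫) := by
      rw [← hγeq]; linarith
    exact le_of_mul_le_mul_left hmul ht0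
  have hD0 : 0 ≤ ⟪p, xp⟫ - ⟪p, x⟫ := by have := key 1 one_pos le_rfl; linarith
  have hfin : r ^ 2 / (2 * ρ) ≤ ⟪p, xp⟫ - ⟪p, x⟫ := by
    refine le_of_forall_pos_le_add fun ε hε => ?_
    set K := r ^ 2 / (2 * ρ) with hK
    have hK0 : 0 ≤ K := div_nonneg (sq_nonneg r) (by linarith)
    rcases le_or_gt K ε with h | h
    · linarith
    · have hKpos : 0 < K := lt_of_le_of_lt hε.le h
      have ht0 : 0 < ε / K := div_pos hε hKpos
      have ht1 : ε / K ≤ 1 := by rw [div_le_one hKpos]; linarith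
      have hkey := key (ε / K) ht0 ht1
      have heq : (1 - ε / K) * K = K - ε := by field_simp
      rw [heq] at hkey
      linarith
  linarith
end

section
/- Set stability of support points under Hausdorff perturbations: let S₁, S₂ ⊆ ℝ^d be nonempty compact sets with Hausdorff distance δ = d_H(S₁, S₂), and suppose S₁ is ρ₁-strongly convex and S₂ is ρ₂-strongly convex. Then for every unit vector p ∈ ℝ^d, the (unique) maximizers x_{S₁}(p) of ⟨p, ·⟩ over S₁ and x_{S₂}(p) of ⟨p, ·⟩ over S₂ satisfy ‖x_{S₁}(p) − x_{S₂}(p)‖ ≤ δ + 2√(ρ_min · δ), where ρ_min = min{ρ₁, ρ₂}. -/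
set_option maxHeartbeats 1000000

open scoped RealInnerProductSpace

lemma key_ineq {d : ℕ} {ρ : ℝ} (hρ : 0 < ρ)
    {S : Set (EuclideanSpace ℝ (Fin d))} (hcomp : IsCompact S)
    (hsc : StronglyConvexSet ρ S)
    {p : EuclideanSpace ℝ (Fin d)} (hp : ‖p‖ = 1)
    {x : EuclideanSpace ℝ (Fin d)} (hx : x ∈ S)
    (hmax : ∀ y ∈ S, ⟪p, y⟫ ≤ ⟪p, x⟫)
    {y : EuclideanSpace ℝ (Fin d)} (hy : y ∈ S) :
    ‖x - y‖ ^ 2 ≤ 2 * ρ * ⟪p, x - y⟫ := by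
  obtain ⟨X, hX⟩ := hsc
  -- D ≤ 2ρ
  have hD : ‖x - y‖ ≤ 2 * ρ := by
    rcases X.eq_empty_or_nonempty with hXe | ⟨z, hz⟩
    · have hSu : S = Set.univ := by simp [hX, hXe]
      obtain ⟨C, hC⟩ := hcomp.isBounded.subset_closedBall 0
      by_contra hlt
      push_neg at hlt
      have h0 : 0 < ‖x - y‖ := by linarith
      obtain ⟨n, hn⟩ := exists_nat_gt (C / ‖x - y‖)
      have hmem : (n : ℝ) • (x - y) ∈ S := by rw [hSu]; trivial
      have := hC hmem
      rw [Metric.mem_closedBall, dist_zero_right, norm_smul] at this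
      simp only [Real.norm_natCast] at this
      rcases (div_lt_iff₀ h0).mp hn with h
      nlinarith [norm_nonneg (x - y)]
    · have hxz : dist x z ≤ ρ := by
        have := hX ▸ hx
        simpa using Set.mem_iInter₂.mp this z hz
      have hyz : dist y z ≤ ρ := by
        have := hX ▸ hy
        simpa using Set.mem_iInter₂.mp this z hz
      calc ‖x - y‖ = dist x y := (dist_eq_norm x y).symm
        _ ≤ dist x z + dist z y := dist_triangle x z y
        _ ≤ 2 * ρ := by rw [dist_comm z y]; linarith
  set D := ‖x - y‖ with hDdef
  have hD0 : 0 ≤ D := norm_nonneg _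
  set I := ⟪p, x - y⟫ with hIdef
  have hstep : ∀ l : ℝ, 0 ≤ l → l < 1 → l * D ^ 2 ≤ 2 * ρ * I := by
    intro l hl0 hl1
    have hl1' : 0 ≤ 1 - l := by linarith
    set μ := l * (1 - l) * D ^ 2 with hμdef
    have hμ0 : 0 ≤ μ := by positivity
    have hμρ : μ ≤ ρ ^ 2 := by nlinarith [sq_nonneg (2 * l - 1), sq_nonneg D, sq_nonneg (D - 2*l*ρ)]
    set s := Real.sqrt (ρ ^ 2 - μ) with hsdef
    have hs2 : s ^ 2 = ρ ^ 2 - μ := Real.sq_sqrt (by linarith)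
    have hs0 : 0 ≤ s := Real.sqrt_nonneg _
    have hsρ : s ≤ ρ := by nlinarith
    set w := l • x + (1 - l) • y + (ρ - s) • p with hwdef
    have hwS : w ∈ S := by
      rw [hX]
      refine Set.mem_iInter₂.mpr fun z hz => ?_
      have hxz : ‖x - z‖ ≤ ρ := by
        have := hX ▸ hx
        have := Set.mem_iInter₂.mp this z hz
        rwa [Metric.mem_closedBall, dist_eq_norm] at this
      have hyz : ‖y - z‖ ≤ ρ := by
        have := hX ▸ hy
        have := Set.mem_iInter₂.mp this z hz
        rwa [Metric.mem_closedBall, dist_eq_norm] at this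
      have hmidsq : ‖l • (x - z) + (1 - l) • (y - z)‖ ^ 2 ≤ ρ ^ 2 - μ := by
        have e1 : ‖l • (x - z) + (1 - l) • (y - z)‖ ^ 2
            = l^2 * ‖x - z‖^2 + 2 * (l * (1-l)) * ⟪x - z, y - z⟫ + (1-l)^2 * ‖y - z‖^2 := by
          rw [norm_add_sq_real, norm_smul, norm_smul, real_inner_smul_left,
            real_inner_smul_right, Real.norm_eq_abs, Real.norm_eq_abs,
            abs_of_nonneg hl0, abs_of_nonneg hl1']
          ring
        have e2 : D ^ 2 = ‖x - z‖^2 - 2 * ⟪x - z, y - z⟫ + ‖y - z‖^2 := by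
          have : x - y = (x - z) - (y - z) := by abel
          rw [hDdef, this, norm_sub_sq_real]
        have hA : ‖x - z‖^2 ≤ ρ^2 := by nlinarith [norm_nonneg (x - z)]
        have hB : ‖y - z‖^2 ≤ ρ^2 := by nlinarith [norm_nonneg (y - z)]
        rw [e1, hμdef, e2]
        nlinarith [mul_le_mul_of_nonneg_left hA hl0, mul_le_mul_of_nonneg_left hB hl1']
      have hmid : ‖l • (x - z) + (1 - l) • (y - z)‖ ≤ s := by
        have h := Real.sqrt_le_sqrt hmidsq
        rwa [Real.sqrt_sq (norm_nonneg _)] at h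
      have hwz : w - z = (l • (x - z) + (1 - l) • (y - z)) + (ρ - s) • p := by
        rw [hwdef]; module
      rw [Metric.mem_closedBall, dist_eq_norm, hwz]
      calc ‖(l • (x - z) + (1 - l) • (y - z)) + (ρ - s) • p‖
          ≤ ‖l • (x - z) + (1 - l) • (y - z)‖ + ‖(ρ - s) • p‖ := norm_add_le _ _
        _ ≤ s + (ρ - s) := by
            rw [norm_smul, Real.norm_eq_abs, abs_of_nonneg (by linarith), hp]
            linarith
        _ = ρ := by ring
    have hpp : ⟪p, p⟫ = 1 := by
      rw [real_inner_self_eq_norm_sq, hp]; norm_num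
    have hinw : ⟪p, w⟫ = l * ⟪p, x⟫ + (1 - l) * ⟪p, y⟫ + (ρ - s) := by
      rw [hwdef, inner_add_right, inner_add_right, real_inner_smul_right,
        real_inner_smul_right, real_inner_smul_right, hpp]
      ring
    have hmw := hmax w hwS
    rw [hinw] at hmw
    have hIeq : I = ⟪p, x⟫ - ⟪p, y⟫ := by rw [hIdef, inner_sub_right]
    -- (1-l) * I ≥ ρ - s ≥ μ/(2ρ)
    have h1 : ρ - s ≤ (1 - l) * I := by rw [hIeq]; nlinarith
    have h2 : μ ≤ 2 * ρ * (ρ - s) := by nlinarith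
    have h3 : l * (1 - l) * D ^ 2 ≤ (1 - l) * (2 * ρ * I) := by nlinarith
    have hpos : 0 < 1 - l := by linarith
    nlinarith
  -- take limit l → 1
  have hI0 : 0 ≤ 2 * ρ * I := by simpa using hstep 0 le_rfl one_pos
  by_contra hcon
  push_neg at hcon
  have hD2pos : 0 < D ^ 2 := lt_of_le_of_lt hI0 hcon
  set r := (2 * ρ * I) / D ^ 2 with hrdef
  have hr1 : r < 1 := by rw [hrdef, div_lt_one hD2pos]; linarith
  have hr0 : 0 ≤ r := div_nonneg hI0 (le_of_lt hD2pos)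
  have := hstep ((r + 1) / 2) (by linarith) (by linarith)
  have hrD : r * D ^ 2 = 2 * ρ * I := by rw [hrdef]; exact div_mul_cancel₀ _ (ne_of_gt hD2pos)
  nlinarith

lemma support_aux {d : ℕ}
    (S₁ S₂ : Set (EuclideanSpace ℝ (Fin d)))
    (hne₁ : S₁.Nonempty) (hne₂ : S₂.Nonempty)
    (hcomp₁ : IsCompact S₁) (hcomp₂ : IsCompact S₂)
    (ρ₁ : ℝ) (hρ₁ : 0 < ρ₁)
    (hsc₁ : StronglyConvexSet ρ₁ S₁)
    (p : EuclideanSpace ℝ (Fin d)) (hp : ‖p‖ = 1)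
    (x₁ : EuclideanSpace ℝ (Fin d)) (hx₁mem : x₁ ∈ S₁)
    (hx₁max : ∀ x ∈ S₁, ⟪p, x⟫ ≤ ⟪p, x₁⟫)
    (x₂ : EuclideanSpace ℝ (Fin d)) (hx₂mem : x₂ ∈ S₂)
    (hx₂max : ∀ x ∈ S₂, ⟪p, x⟫ ≤ ⟪p, x₂⟫) :
    ‖x₁ - x₂‖ ≤ Metric.hausdorffDist S₁ S₂ +
      2 * Real.sqrt (ρ₁ * Metric.hausdorffDist S₁ S₂) := by
  set δ := Metric.hausdorffDist S₁ S₂ with hδdef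
  have hδ0 : 0 ≤ δ := Metric.hausdorffDist_nonneg
  have hfin : EMetric.hausdorffEdist S₁ S₂ ≠ ⊤ :=
    Metric.hausdorffEdist_ne_top_of_nonempty_of_bounded hne₁ hne₂
      hcomp₁.isBounded hcomp₂.isBounded
  -- y₁ ∈ S₁ close to x₂
  obtain ⟨y₁, hy₁S, hy₁d⟩ := hcomp₁.exists_infDist_eq_dist hne₁ x₂
  have hy₁δ : dist x₂ y₁ ≤ δ := by
    rw [← hy₁d, hδdef, Metric.hausdorffDist_comm]
    exact Metric.infDist_le_hausdorffDist_of_mem hx₂mem (by rwa [EMetric.hausdorffEdist_comm])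
  -- y₂ ∈ S₂ close to x₁
  obtain ⟨y₂, hy₂S, hy₂d⟩ := hcomp₂.exists_infDist_eq_dist hne₂ x₁
  have hy₂δ : dist x₁ y₂ ≤ δ := by
    rw [← hy₂d]
    exact Metric.infDist_le_hausdorffDist_of_mem hx₁mem hfin
  -- ⟪p, x₁⟫ - ⟪p, x₂⟫ ≤ δ
  have h1 : ⟪p, x₁⟫ - ⟪p, x₂⟫ ≤ δ := by
    have hi : ⟪p, x₁ - y₂⟫ ≤ δ := by
      calc ⟪p, x₁ - y₂⟫ ≤ ‖p‖ * ‖x₁ - y₂‖ := real_inner_le_norm _ _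
        _ = dist x₁ y₂ := by rw [hp, one_mul, dist_eq_norm]
        _ ≤ δ := hy₂δ
    have := hx₂max y₂ hy₂S
    rw [inner_sub_right] at hi
    linarith
  -- ⟪p, x₂⟫ - ⟪p, y₁⟫ ≤ δ
  have h2 : ⟪p, x₂⟫ - ⟪p, y₁⟫ ≤ δ := by
    have hi : ⟪p, x₂ - y₁⟫ ≤ δ := by
      calc ⟪p, x₂ - y₁⟫ ≤ ‖p‖ * ‖x₂ - y₁‖ := real_inner_le_norm _ _
        _ = dist x₂ y₁ := by rw [hp, one_mul, dist_eq_norm]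
        _ ≤ δ := hy₁δ
    rwa [inner_sub_right] at hi
  have hkey := key_ineq hρ₁ hcomp₁ hsc₁ hp hx₁mem hx₁max hy₁S
  rw [inner_sub_right] at hkey
  have hsq : ‖x₁ - y₁‖ ^ 2 ≤ 4 * (ρ₁ * δ) := by nlinarith
  have hle : ‖x₁ - y₁‖ ≤ 2 * Real.sqrt (ρ₁ * δ) := by
    have h4 : (4 : ℝ) * (ρ₁ * δ) = (2 * Real.sqrt (ρ₁ * δ)) ^ 2 := by
      rw [mul_pow, Real.sq_sqrt (by positivity)]
      ring
    rw [h4] at hsq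
    exact le_of_sq_le_sq hsq (by positivity)
  calc ‖x₁ - x₂‖ ≤ ‖x₁ - y₁‖ + ‖y₁ - x₂‖ := norm_sub_le_norm_sub_add_norm_sub _ _ _
    _ ≤ 2 * Real.sqrt (ρ₁ * δ) + δ := by
        have : ‖y₁ - x₂‖ = dist x₂ y₁ := by rw [dist_eq_norm, norm_sub_rev]
        linarith [this ▸ hy₁δ]
    _ = δ + 2 * Real.sqrt (ρ₁ * δ) := by ring

/-- **Set stability of support points under Hausdorff perturbations.**
For nonempty compact strongly convex sets `S₁` (`ρ₁`) and `S₂` (`ρ₂`) with Hausdorff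
distance `δ`, and a unit direction `p`, any maximizers `x₁` of `⟨p, ·⟩` over `S₁` and
`x₂` over `S₂` satisfy `‖x₁ − x₂‖ ≤ δ + 2√(ρ_min δ)`. -/
theorem support_point_set_stability {d : ℕ}
    (S₁ S₂ : Set (EuclideanSpace ℝ (Fin d)))
    (hne₁ : S₁.Nonempty) (hne₂ : S₂.Nonempty)
    (hcomp₁ : IsCompact S₁) (hcomp₂ : IsCompact S₂)
    (ρ₁ ρ₂ : ℝ) (hρ₁ : 0 < ρ₁) (hρ₂ : 0 < ρ₂)
    (hsc₁ : StronglyConvexSet ρ₁ S₁) (hsc₂ : StronglyConvexSet ρ₂ S₂)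
    (p : EuclideanSpace ℝ (Fin d)) (hp : ‖p‖ = 1)
    (x₁ : EuclideanSpace ℝ (Fin d)) (hx₁mem : x₁ ∈ S₁)
    (hx₁max : ∀ x ∈ S₁, ⟪p, x⟫ ≤ ⟪p, x₁⟫)
    (x₂ : EuclideanSpace ℝ (Fin d)) (hx₂mem : x₂ ∈ S₂)
    (hx₂max : ∀ x ∈ S₂, ⟪p, x⟫ ≤ ⟪p, x₂⟫) :
    ‖x₁ - x₂‖ ≤ Metric.hausdorffDist S₁ S₂ +
      2 * Real.sqrt (min ρ₁ ρ₂ * Metric.hausdorffDist S₁ S₂) := by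
  rcases le_total ρ₁ ρ₂ with hle | hle
  · rw [min_eq_left hle]
    exact support_aux S₁ S₂ hne₁ hne₂ hcomp₁ hcomp₂ ρ₁ hρ₁ hsc₁ p hp x₁ hx₁mem hx₁max x₂ hx₂mem hx₂max
  · rw [min_eq_right hle, norm_sub_rev, Metric.hausdorffDist_comm]
    exact support_aux S₂ S₁ hne₂ hne₁ hcomp₂ hcomp₁ ρ₂ hρ₂ hsc₂ p hp x₂ hx₂mem hx₂max x₁ hx₁mem hx₁max
end

section
/- Bounding linear functionals across two sets under strong convexity: let S_ref, S_cl ⊆ ℝ^d be nonempty compact sets with Hausdorff distance δ = d_H(S_ref, S_cl), with S_ref being ρ_ref-strongly convex and S_cl being ρ_cl-strongly convex, and let ρ_min = min{ρ_ref, ρ_cl}. Let c_ref, c_cl ∈ ℝ^d be nonzero, and let w⋆_ref be the minimizer of ⟨c_ref, ·⟩ over S_ref and w⋆_cl the minimizer of ⟨c_cl, ·⟩ over S_cl. Then for every ĉ ∈ ℝ^d, |⟨ĉ, w⋆_ref − w⋆_cl⟩| ≤ ‖ĉ‖ · Γ, where Γ = ρ_min · ‖c_ref/‖c_ref‖ −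 c_cl/‖c_cl‖‖ + δ + 2√(ρ_min · δ). -/
open scoped RealInnerProductSpace

section Aux

variable {d : ℕ}

local notation "E" => EuclideanSpace ℝ (Fin d)

lemma le_of_sq_le' {a b : ℝ} (ha : 0 ≤ a) (hb : 0 ≤ b) (h : a ^ 2 ≤ b ^ 2) : a ≤ b := by
  have := Real.sqrt_le_sqrt h
  rwa [Real.sqrt_sq ha, Real.sqrt_sq hb] at this

/-- Strong convexity: the shifted combination point stays in the set. -/
lemma sc_point {ρ : ℝ} (hρ : 0 < ρ) {S : Set E} (hS : StronglyConvexSet ρ S)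
    {w y u : E} (hw : w ∈ S) (hy : y ∈ S) (hu : ‖u‖ = 1)
    {t : ℝ} (ht0 : 0 ≤ t) (ht1 : t ≤ 1) :
    w + t • (y - w) - (t * (1 - t) * ‖y - w‖ ^ 2 / (2 * ρ)) • u ∈ S := by
  obtain ⟨X, rfl⟩ := hS
  simp only [Set.mem_iInter, Metric.mem_closedBall] at hw hy ⊢
  intro x hx
  have hwx : ‖w - x‖ ≤ ρ := by
    rw [← dist_eq_norm]; exact hw x hx
  have hyx : ‖y - x‖ ≤ ρ := by
    rw [← dist_eq_norm]; exact hy x hx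
  set c : ℝ := t * (1 - t) * ‖y - w‖ ^ 2 with hc
  have hc0 : 0 ≤ c := by
    have h1t : 0 ≤ 1 - t := by linarith
    positivity
  have hyw : ‖y - w‖ ^ 2 = ‖w - x‖ ^ 2 - 2 * ⟪w - x, y - x⟫ + ‖y - x‖ ^ 2 := by
    have : y - w = (y - x) - (w - x) := by abel
    rw [this, norm_sub_sq_real, real_inner_comm]; ring
  have hmx : w + t • (y - w) - x = (1 - t) • (w - x) + t • (y - x) := by
    module
  have h1 : ‖w + t • (y - w) - x‖ ^ 2 ≤ ρ ^ 2 - c := by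
    rw [hmx, norm_add_sq_real, real_inner_smul_left, real_inner_smul_right,
      norm_smul, norm_smul, mul_pow, mul_pow, Real.norm_eq_abs, Real.norm_eq_abs,
      sq_abs, sq_abs, hc, hyw]
    have hA2 : ‖w - x‖ ^ 2 ≤ ρ ^ 2 := by nlinarith [norm_nonneg (w - x)]
    have hB2 : ‖y - x‖ ^ 2 ≤ ρ ^ 2 := by nlinarith [norm_nonneg (y - x)]
    nlinarith [mul_nonneg (sub_nonneg.2 ht1) (sub_nonneg.2 hA2),
      mul_nonneg ht0 (sub_nonneg.2 hB2)]
  have hcρ : c ≤ ρ ^ 2 := by nlinarith [sq_nonneg ‖w + t • (y - w) - x‖]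
  have h2 : ‖w + t • (y - w) - x‖ ≤ ρ - c / (2 * ρ) := by
    have hr0 : 0 ≤ ρ - c / (2 * ρ) := by
      rw [sub_nonneg, div_le_iff₀ (by positivity)]; nlinarith
    refine le_of_sq_le' (norm_nonneg _) hr0 ?_
    have hid : (ρ - c / (2 * ρ)) ^ 2 = ρ ^ 2 - c + (c / (2 * ρ)) ^ 2 := by
      field_simp; ring
    nlinarith [sq_nonneg (c / (2 * ρ))]
  have h3 : dist (w + t • (y - w) - (c / (2 * ρ)) • u) x ≤ ρ := by
    rw [dist_eq_norm]
    have : w + t • (y - w) - (c / (2 * ρ)) • u - x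
        = (w + t • (y - w) - x) - (c / (2 * ρ)) • u := by abel
    rw [this]
    calc ‖(w + t • (y - w) - x) - (c / (2 * ρ)) • u‖
        ≤ ‖w + t • (y - w) - x‖ + ‖(c / (2 * ρ)) • u‖ := norm_sub_le _ _
      _ ≤ (ρ - c / (2 * ρ)) + c / (2 * ρ) := by
          rw [norm_smul, Real.norm_eq_abs, hu, mul_one,
            abs_of_nonneg (by positivity : (0:ℝ) ≤ c / (2 * ρ))]
          exact add_le_add_left h2 _
      _ = ρ := by ring
  simpa using h3

/-- Quadratic growth at the minimizer of a linear functional over a strongly convex set. -/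
lemma sc_growth {ρ : ℝ} (hρ : 0 < ρ) {S : Set E} (hS : StronglyConvexSet ρ S)
    {c w : E} (hc : c ≠ 0) (hw : w ∈ S) (hmin : ∀ z ∈ S, ⟪c, w⟫ ≤ ⟪c, z⟫)
    {y : E} (hy : y ∈ S) :
    ‖y - w‖ ^ 2 / (2 * ρ) ≤ ⟪‖c‖⁻¹ • c, y - w⟫ := by
  set u : E := ‖c‖⁻¹ • c with hudef
  have hu : ‖u‖ = 1 := by rw [hudef]; exact norm_smul_inv_norm hc
  have humin : ∀ z ∈ S, ⟪u, w⟫ ≤ ⟪u, z⟫ := by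
    intro z hz
    rw [hudef, real_inner_smul_left, real_inner_smul_left]
    exact mul_le_mul_of_nonneg_left (hmin z hz) (inv_nonneg.2 (norm_nonneg _))
  have hB0 : 0 ≤ ‖y - w‖ ^ 2 / (2 * ρ) := by positivity
  have key : ∀ t : ℝ, 0 < t → t ≤ 1 →
      (1 - t) * (‖y - w‖ ^ 2 / (2 * ρ)) ≤ ⟪u, y - w⟫ := by
    intro t ht0 ht1
    have hmem := sc_point hρ hS hw hy hu (le_of_lt ht0) ht1
    have h := humin _ hmem
    rw [inner_sub_right, inner_add_right, real_inner_smul_right, real_inner_smul_right,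
      real_inner_self_eq_norm_sq, hu] at h
    have h'' : t * ((1 - t) * (‖y - w‖ ^ 2 / (2 * ρ))) ≤ t * ⟪u, y - w⟫ := by
      ring_nf at h ⊢
      linarith
    exact le_of_mul_le_mul_left h'' ht0
  have hA0 : 0 ≤ ⟪u, y - w⟫ := by
    have := key 1 one_pos le_rfl
    simpa using this
  by_contra hcon
  push_neg at hcon
  have hBpos : 0 < ‖y - w‖ ^ 2 / (2 * ρ) := lt_of_le_of_lt hA0 hcon
  set A : ℝ := ⟪u, y - w⟫
  set B : ℝ := ‖y - w‖ ^ 2 / (2 * ρ)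
  have ht0 : 0 < (B - A) / (2 * B) := div_pos (by linarith) (by linarith)
  have ht1 : (B - A) / (2 * B) ≤ 1 := by
    rw [div_le_one (by linarith)]; linarith
  have hk := key _ ht0 ht1
  have hid : (1 - (B - A) / (2 * B)) * B = (B + A) / 2 := by
    field_simp; ring
  rw [hid] at hk
  linarith

/-- Supporting ball: the strongly convex set is contained in a ball of radius `ρ`
touching the minimizer. -/
lemma sc_ball {ρ : ℝ} (hρ : 0 < ρ) {S : Set E} (hS : StronglyConvexSet ρ S)
    {c w : E} (hc : c ≠ 0) (hw : w ∈ S) (hmin : ∀ z ∈ S, ⟪c, w⟫ ≤ ⟪c, z⟫)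
    {y : E} (hy : y ∈ S) :
    ‖y - w - ρ • (‖c‖⁻¹ • c)‖ ≤ ρ := by
  set u : E := ‖c‖⁻¹ • c with hudef
  have hu : ‖u‖ = 1 := by rw [hudef]; exact norm_smul_inv_norm hc
  have hg := sc_growth hρ hS hc hw hmin hy
  rw [← hudef] at hg
  have hsq : ‖y - w - ρ • u‖ ^ 2 ≤ ρ ^ 2 := by
    rw [norm_sub_sq_real, real_inner_smul_right, norm_smul, Real.norm_eq_abs,
      abs_of_pos hρ, hu, mul_one]
    have h1 : ‖y - w‖ ^ 2 ≤ 2 * ρ * ⟪u, y - w⟫ := by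
      rw [div_le_iff₀ (by positivity)] at hg; linarith [hg]
    have h2 : ⟪y - w, u⟫ = ⟪u, y - w⟫ := real_inner_comm _ _
    nlinarith [h1, h2]
  exact le_of_sq_le' (norm_nonneg _) (le_of_lt hρ) hsq

/-- Lipschitz dependence of the minimizer on the direction, over one set. -/
lemma sc_lip {ρ : ℝ} (hρ : 0 < ρ) {S : Set E} (hS : StronglyConvexSet ρ S)
    {c₁ c₂ w₁ w₂ : E} (hc₁ : c₁ ≠ 0) (hc₂ : c₂ ≠ 0)
    (hw₁ : w₁ ∈ S) (hmin₁ : ∀ z ∈ S, ⟪c₁, w₁⟫ ≤ ⟪c₁, z⟫)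
    (hw₂ : w₂ ∈ S) (hmin₂ : ∀ z ∈ S, ⟪c₂, w₂⟫ ≤ ⟪c₂, z⟫) :
    ‖w₁ - w₂‖ ≤ ρ * ‖‖c₁‖⁻¹ • c₁ - ‖c₂‖⁻¹ • c₂‖ := by
  have h1 := sc_growth hρ hS hc₁ hw₁ hmin₁ hw₂
  have h2 := sc_growth hρ hS hc₂ hw₂ hmin₂ hw₁
  set u₁ : E := ‖c₁‖⁻¹ • c₁
  set u₂ : E := ‖c₂‖⁻¹ • c₂
  have hsum : ‖w₁ - w₂‖ ^ 2 / ρ ≤ ⟪u₁ - u₂, w₂ - w₁⟫ := by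
    rw [inner_sub_left]
    have e : ⟪u₂, w₂ - w₁⟫ = - ⟪u₂, w₁ - w₂⟫ := by
      rw [← inner_neg_right]; congr 1; abel
    rw [e]
    have hn : ‖w₂ - w₁‖ = ‖w₁ - w₂‖ := by rw [← neg_sub, norm_neg]
    rw [hn] at h1
    have := add_le_add h1 h2
    have hhalf : ‖w₁ - w₂‖ ^ 2 / (2 * ρ) + ‖w₁ - w₂‖ ^ 2 / (2 * ρ) = ‖w₁ - w₂‖ ^ 2 / ρ := by
      field_simp; ring
    linarith [this, hhalf.symm.le]
  have hcs : ⟪u₁ - u₂, w₂ - w₁⟫ ≤ ‖u₁ - u₂‖ * ‖w₂ - w₁‖ := real_inner_le_norm _ _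
  have hn : ‖w₂ - w₁‖ = ‖w₁ - w₂‖ := by rw [← neg_sub, norm_neg]
  rw [hn] at hcs
  rcases eq_or_lt_of_le (norm_nonneg (w₁ - w₂)) with h0 | hpos
  · rw [← h0]; positivity
  · have : ‖w₁ - w₂‖ ^ 2 / ρ ≤ ‖u₁ - u₂‖ * ‖w₁ - w₂‖ := le_trans hsum hcs
    rw [div_le_iff₀ hρ] at this
    nlinarith [this]

/-- Cross-set bound for minimizers of the same cost over two nearby sets;
`ρ` is the strong convexity constant of the first set. -/
lemma sc_cross {ρ δ : ℝ} (hρ : 0 < ρ) (hδ : 0 ≤ δ) {S₁ S₂ : Set E}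
    (hS₁ : StronglyConvexSet ρ S₁)
    {c w₁ w₂ : E} (hc : c ≠ 0)
    (hw₁ : w₁ ∈ S₁) (hmin₁ : ∀ z ∈ S₁, ⟪c, w₁⟫ ≤ ⟪c, z⟫)
    (hw₂ : w₂ ∈ S₂) (hmin₂ : ∀ z ∈ S₂, ⟪c, w₂⟫ ≤ ⟪c, z⟫)
    (h12 : ∀ p ∈ S₁, ∃ q ∈ S₂, dist p q ≤ δ)
    (h21 : ∀ p ∈ S₂, ∃ q ∈ S₁, dist p q ≤ δ) :
    ‖w₁ - w₂‖ ≤ δ + 2 * Real.sqrt (ρ * δ) := by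
  set u : E := ‖c‖⁻¹ • c with hudef
  have hu : ‖u‖ = 1 := by rw [hudef]; exact norm_smul_inv_norm hc
  have humin₂ : ∀ z ∈ S₂, ⟪u, w₂⟫ ≤ ⟪u, z⟫ := by
    intro z hz
    rw [hudef, real_inner_smul_left, real_inner_smul_left]
    exact mul_le_mul_of_nonneg_left (hmin₂ z hz) (inv_nonneg.2 (norm_nonneg _))
  obtain ⟨w₂', hw₂'mem, hw₂'⟩ := h21 w₂ hw₂
  obtain ⟨w₁', hw₁'mem, hw₁'⟩ := h12 w₁ hw₁
  have hg := sc_growth hρ hS₁ hc hw₁ hmin₁ hw₂'mem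
  rw [← hudef] at hg
  -- ⟪u, w₂' - w₁⟫ ≤ 2δ
  have step1 : ⟪u, w₂' - w₂⟫ ≤ δ := by
    calc ⟪u, w₂' - w₂⟫ ≤ ‖u‖ * ‖w₂' - w₂‖ := real_inner_le_norm _ _
      _ = ‖w₂' - w₂‖ := by rw [hu, one_mul]
      _ ≤ δ := by
          rw [← dist_eq_norm, dist_comm]; exact hw₂'
  have step2 : ⟪u, w₂⟫ ≤ ⟪u, w₁⟫ + δ := by
    have h1 : ⟪u, w₂⟫ ≤ ⟪u, w₁'⟫ := humin₂ _ hw₁'mem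
    have h2 : ⟪u, w₁'⟫ - ⟪u, w₁⟫ ≤ δ := by
      calc ⟪u, w₁'⟫ - ⟪u, w₁⟫ = ⟪u, w₁' - w₁⟫ := by rw [inner_sub_right]
        _ ≤ ‖u‖ * ‖w₁' - w₁‖ := real_inner_le_norm _ _
        _ = ‖w₁' - w₁‖ := by rw [hu, one_mul]
        _ ≤ δ := by rw [← dist_eq_norm, dist_comm]; exact hw₁'
    linarith
  have hup : ⟪u, w₂' - w₁⟫ ≤ 2 * δ := by
    have : ⟪u, w₂' - w₁⟫ = ⟪u, w₂' - w₂⟫ + (⟪u, w₂⟫ - ⟪u, w₁⟫) := by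
      rw [inner_sub_right, inner_sub_right]; ring
    linarith [this.le, this.ge, step1, step2]
  have hsq : ‖w₂' - w₁‖ ^ 2 ≤ 4 * (ρ * δ) := by
    rw [div_le_iff₀ (by positivity)] at hg
    nlinarith [hg, hup]
  have hnorm : ‖w₂' - w₁‖ ≤ 2 * Real.sqrt (ρ * δ) := by
    have hs : (2 * Real.sqrt (ρ * δ)) ^ 2 = 4 * (ρ * δ) := by
      rw [mul_pow, Real.sq_sqrt (by positivity)]; ring
    refine le_of_sq_le' (norm_nonneg _) (by positivity) ?_
    rw [hs]; exact hsq
  calc ‖w₁ - w₂‖ ≤ ‖w₁ - w₂'‖ + ‖w₂' - w₂‖ := norm_sub_le_norm_sub_add_norm_sub _ _ _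
    _ ≤ 2 * Real.sqrt (ρ * δ) + δ := by
        have h1 : ‖w₁ - w₂'‖ = ‖w₂' - w₁‖ := by rw [← neg_sub, norm_neg]
        have h2 : ‖w₂' - w₂‖ ≤ δ := by rw [← dist_eq_norm, dist_comm]; exact hw₂'
        linarith [hnorm, h1.le, h1.ge, h2]
    _ = δ + 2 * Real.sqrt (ρ * δ) := by ring

end Aux

/-- **Bounding linear functionals across two sets under strong convexity.**
With `δ = d_H(S_ref, S_cl)` and `ρ_min = min{ρ_ref, ρ_cl}`, for nonzero `c_ref, c_cl` and
minimizers `w⋆_ref, w⋆_cl` of the respective costs over the respective sets, every `ĉ`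
satisfies `|⟨ĉ, w⋆_ref − w⋆_cl⟩| ≤ ‖ĉ‖ Γ` with
`Γ = ρ_min ‖c_ref/‖c_ref‖ − c_cl/‖c_cl‖‖ + δ + 2√(ρ_min δ)`. -/
theorem linear_functional_cross_set_bound_strongly_convex {d : ℕ}
    (Sref Scl : Set (EuclideanSpace ℝ (Fin d)))
    (hneref : Sref.Nonempty) (hnecl : Scl.Nonempty)
    (hcompref : IsCompact Sref) (hcompcl : IsCompact Scl)
    (ρref ρcl : ℝ) (hρref : 0 < ρref) (hρcl : 0 < ρcl)
    (hscref : StronglyConvexSet ρref Sref) (hsccl : StronglyConvexSet ρcl Scl)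
    (cref ccl : EuclideanSpace ℝ (Fin d)) (hcref : cref ≠ 0) (hccl : ccl ≠ 0)
    (wref : EuclideanSpace ℝ (Fin d)) (hwrefmem : wref ∈ Sref)
    (hwrefmin : ∀ w ∈ Sref, ⟪cref, wref⟫ ≤ ⟪cref, w⟫)
    (wcl : EuclideanSpace ℝ (Fin d)) (hwclmem : wcl ∈ Scl)
    (hwclmin : ∀ w ∈ Scl, ⟪ccl, wcl⟫ ≤ ⟪ccl, w⟫)
    (chat : EuclideanSpace ℝ (Fin d)) :
    |⟪chat, wref - wcl⟫| ≤
      ‖chat‖ * (min ρref ρcl * ‖‖cref‖⁻¹ • cref - ‖ccl‖⁻¹ • ccl‖ +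
        Metric.hausdorffDist Sref Scl +
        2 * Real.sqrt (min ρref ρcl * Metric.hausdorffDist Sref Scl)) := by
  set δ : ℝ := Metric.hausdorffDist Sref Scl with hδdef
  have hδ0 : 0 ≤ δ := Metric.hausdorffDist_nonneg
  have hfin : EMetric.hausdorffEdist Sref Scl ≠ ⊤ :=
    Metric.hausdorffEdist_ne_top_of_nonempty_of_bounded hneref hnecl
      hcompref.isBounded hcompcl.isBounded
  have h12 : ∀ p ∈ Sref, ∃ q ∈ Scl, dist p q ≤ δ := by
    intro p hp
    obtain ⟨q, hq, hq'⟩ := hcompcl.exists_infDist_eq_dist hnecl p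
    exact ⟨q, hq, by rw [← hq']; exact Metric.infDist_le_hausdorffDist_of_mem hp hfin⟩
  have h21 : ∀ p ∈ Scl, ∃ q ∈ Sref, dist p q ≤ δ := by
    intro p hp
    obtain ⟨q, hq, hq'⟩ := hcompref.exists_infDist_eq_dist hneref p
    refine ⟨q, hq, ?_⟩
    rw [← hq']
    calc Metric.infDist p Sref ≤ Metric.hausdorffDist Scl Sref :=
          Metric.infDist_le_hausdorffDist_of_mem hp (by rwa [EMetric.hausdorffEdist_comm])
      _ = δ := Metric.hausdorffDist_comm
  have key : ‖wref - wcl‖ ≤ min ρref ρcl * ‖‖cref‖⁻¹ • cref - ‖ccl‖⁻¹ • ccl‖ + δ +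
      2 * Real.sqrt (min ρref ρcl * δ) := by
    rcases le_total ρref ρcl with hle | hle
    · rw [min_eq_left hle]
      -- intermediate: minimizer of ⟪ccl,·⟫ over Sref
      have hcont : Continuous fun x : EuclideanSpace ℝ (Fin d) => (⟪ccl, x⟫ : ℝ) :=
        Continuous.inner continuous_const continuous_id
      obtain ⟨w', hw'mem, hw'min⟩ := hcompref.exists_isMinOn hneref hcont.continuousOn
      have hw'min' : ∀ z ∈ Sref, ⟪ccl, w'⟫ ≤ ⟪ccl, z⟫ := fun z hz => hw'min hz
      have hlip := sc_lip hρref hscref hcref hccl hwrefmem hwrefmin hw'mem hw'min'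
      have hcross := sc_cross hρref hδ0 hscref hccl hw'mem hw'min' hwclmem hwclmin h12 h21
      calc ‖wref - wcl‖ ≤ ‖wref - w'‖ + ‖w' - wcl‖ := norm_sub_le_norm_sub_add_norm_sub _ _ _
        _ ≤ ρref * ‖‖cref‖⁻¹ • cref - ‖ccl‖⁻¹ • ccl‖ + (δ + 2 * Real.sqrt (ρref * δ)) :=
            add_le_add hlip hcross
        _ = ρref * ‖‖cref‖⁻¹ • cref - ‖ccl‖⁻¹ • ccl‖ + δ + 2 * Real.sqrt (ρref * δ) := by ring
    · rw [min_eq_right hle]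
      -- intermediate: minimizer of ⟪cref,·⟫ over Scl
      have hcont : Continuous fun x : EuclideanSpace ℝ (Fin d) => (⟪cref, x⟫ : ℝ) :=
        Continuous.inner continuous_const continuous_id
      obtain ⟨w', hw'mem, hw'min⟩ := hcompcl.exists_isMinOn hnecl hcont.continuousOn
      have hw'min' : ∀ z ∈ Scl, ⟪cref, w'⟫ ≤ ⟪cref, z⟫ := fun z hz => hw'min hz
      have hcross := sc_cross hρcl hδ0 hsccl hcref hw'mem hw'min' hwrefmem hwrefmin
        (fun p hp => by obtain ⟨q, hq, h⟩ := h21 p hp; exact ⟨q, hq, h⟩)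
        (fun p hp => by obtain ⟨q, hq, h⟩ := h12 p hp; exact ⟨q, hq, h⟩)
      have hlip := sc_lip hρcl hsccl hcref hccl hw'mem hw'min' hwclmem hwclmin
      have h1 : ‖wref - w'‖ = ‖w' - wref‖ := by rw [← neg_sub, norm_neg]
      calc ‖wref - wcl‖ ≤ ‖wref - w'‖ + ‖w' - wcl‖ := norm_sub_le_norm_sub_add_norm_sub _ _ _
        _ ≤ (δ + 2 * Real.sqrt (ρcl * δ)) + ρcl * ‖‖cref‖⁻¹ • cref - ‖ccl‖⁻¹ • ccl‖ := by
            rw [h1]; exact add_le_add hcross hlip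
        _ = ρcl * ‖‖cref‖⁻¹ • cref - ‖ccl‖⁻¹ • ccl‖ + δ + 2 * Real.sqrt (ρcl * δ) := by ring
  calc |⟪chat, wref - wcl⟫| ≤ ‖chat‖ * ‖wref - wcl‖ := abs_real_inner_le_norm _ _
    _ ≤ ‖chat‖ * (min ρref ρcl * ‖‖cref‖⁻¹ • cref - ‖ccl‖⁻¹ • ccl‖ + δ +
        2 * Real.sqrt (min ρref ρcl * δ)) :=
        mul_le_mul_of_nonneg_left key (norm_nonneg _)
end

section
/- Strongly convex refinement of the SPO+ discrepancy bound: let S_ref, S_cl ⊆ ℝ^d be nonempty compact sets, with S_ref being ρ_ref-strongly convex and S_cl being ρ_cl-strongly convex, ρ_min = min{ρ_ref, ρ_cl}, and let c_ref, c_cl ∈ ℝ^d be nonzero and ĉ ∈ ℝ^d. Let w⋆_ref, w⋆_cl be the minimizers of ⟨c_ref, ·⟩ over S_ref and ⟨c_cl, ·⟩ over S_cl respectively. Define c_d = ‖c_ref − c_cl‖, δ_N = inf_{v∈ℝ^d} d_H(S_ref, S_cl + v), D_ref = D(S_ref), D_cl = D(S_cl), T = min{ D_ref·c_d + δ_N(‖c_cl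 − 2ĉ‖ + ‖c_cl‖), D_cl·c_d + δ_N(‖c_ref − 2ĉ‖ + ‖c_ref‖) }, and B_SC(ĉ) = 2‖ĉ‖ · (ρ_min · ‖c_ref/‖c_ref‖ − c_cl/‖c_cl‖‖ + δ_N + 2√(ρ_min · δ_N)). Then |ℓ_{S_ref}(ĉ, c_ref) − ℓ_{S_cl}(ĉ, c_cl)| ≤ B_SC(ĉ) + T. -/
open scoped RealInnerProductSpace

/-- SPO+ loss with a chosen minimizer `w⋆` of `⟨c, ·⟩` over `S`. -/
noncomputable def spoPlus {d : ℕ} (S : Set (EuclideanSpace ℝ (Fin d)))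
    (chat c wstar : EuclideanSpace ℝ (Fin d)) : ℝ :=
  supp S (c - (2 : ℝ) • chat) + 2 * ⟪chat, wstar⟫ - zstar S c

/-- The translate `S + v = {w + v : w ∈ S}`. -/
def setTranslate {d : ℕ} (S : Set (EuclideanSpace ℝ (Fin d)))
    (v : EuclideanSpace ℝ (Fin d)) : Set (EuclideanSpace ℝ (Fin d)) :=
  (fun w => w + v) '' S

/-- Translation-invariant shape distance `δ_N = inf_v d_H(S₁, S₂ + v)`. -/
noncomputable def shapeDist {d : ℕ}
    (S₁ S₂ : Set (EuclideanSpace ℝ (Fin d))) : ℝ :=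
  ⨅ v : EuclideanSpace ℝ (Fin d), Metric.hausdorffDist S₁ (setTranslate S₂ v)

namespace SPOAux

variable {d : ℕ}

lemma inner_cont (u : EuclideanSpace ℝ (Fin d)) :
    Continuous fun w : EuclideanSpace ℝ (Fin d) => ⟪u, w⟫ :=
  continuous_const.inner continuous_id

lemma exists_max (S : Set (EuclideanSpace ℝ (Fin d))) (hS : IsCompact S) (hne : S.Nonempty)
    (u : EuclideanSpace ℝ (Fin d)) :
    ∃ m ∈ S, (∀ w ∈ S, ⟪u, w⟫ ≤ ⟪u, m⟫) ∧ supp S u = ⟪u, m⟫ := by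
  obtain ⟨m, hm, hmax'⟩ := hS.exists_isMaxOn hne (inner_cont u).continuousOn
  have hmax : ∀ w ∈ S, ⟪u, w⟫ ≤ ⟪u, m⟫ := fun w hw => hmax' hw
  refine ⟨m, hm, hmax, le_antisymm (csSup_le (hne.image _) ?_) (le_csSup ⟨⟪u, m⟫, ?_⟩ ⟨m, hm, rfl⟩)⟩
  · rintro x ⟨w, hw, rfl⟩; exact hmax w hw
  · rintro x ⟨w, hw, rfl⟩; exact hmax w hw

lemma le_supp {S : Set (EuclideanSpace ℝ (Fin d))} (hS : IsCompact S) (hne : S.Nonempty)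
    {u w : EuclideanSpace ℝ (Fin d)} (hw : w ∈ S) : ⟪u, w⟫ ≤ supp S u := by
  obtain ⟨m, hm, hmax, hsup⟩ := exists_max S hS hne u
  rw [hsup]; exact hmax w hw

lemma zstar_eq {S : Set (EuclideanSpace ℝ (Fin d))} {c w : EuclideanSpace ℝ (Fin d)}
    (hw : w ∈ S) (hmin : ∀ x ∈ S, ⟪c, w⟫ ≤ ⟪c, x⟫) : zstar S c = ⟪c, w⟫ := by
  refine le_antisymm (csInf_le ⟨⟪c, w⟫, ?_⟩ ⟨w, hw, rfl⟩) (le_csInf ⟨⟪c, w⟫, w, hw, rfl⟩ ?_)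
  · rintro x ⟨y, hy, rfl⟩; exact hmin y hy
  · rintro x ⟨y, hy, rfl⟩; exact hmin y hy

lemma spoPlus_eq {S : Set (EuclideanSpace ℝ (Fin d))} {chat c w : EuclideanSpace ℝ (Fin d)}
    (hw : w ∈ S) (hmin : ∀ x ∈ S, ⟪c, w⟫ ≤ ⟪c, x⟫) :
    spoPlus S chat c w = supp S (c - (2 : ℝ) • chat) - ⟪c - (2 : ℝ) • chat, w⟫ := by
  rw [spoPlus, zstar_eq hw hmin, inner_sub_left, real_inner_smul_left]; ring


lemma exists_close {S₁ S₂ : Set (EuclideanSpace ℝ (Fin d))} {a : EuclideanSpace ℝ (Fin d)}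
    (ha : a ∈ S₁) (hb₁ : Bornology.IsBounded S₁) (hb₂ : Bornology.IsBounded S₂)
    (hne₂ : S₂.Nonempty) {t : ℝ} (hd : Metric.hausdorffDist S₁ S₂ < t) :
    ∃ b ∈ S₂, ‖a - b‖ < t := by
  obtain ⟨b, hb, hab⟩ := Metric.exists_dist_lt_of_hausdorffDist_lt ha hd
    (Metric.hausdorffEdist_ne_top_of_nonempty_of_bounded ⟨a, ha⟩ hne₂ hb₁ hb₂)
  exact ⟨b, hb, by simpa [dist_eq_norm] using hab⟩

set_option maxHeartbeats 2000000 in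
/-- Quadratic growth at a minimizer of a strongly convex set. -/
lemma growth {S : Set (EuclideanSpace ℝ (Fin d))} {ρ : ℝ} (hρ : 0 < ρ)
    (hsc : StronglyConvexSet ρ S) {c w : EuclideanSpace ℝ (Fin d)} (hc : c ≠ 0)
    (hw : w ∈ S) (hmin : ∀ x ∈ S, ⟪c, w⟫ ≤ ⟪c, x⟫)
    {s : EuclideanSpace ℝ (Fin d)} (hs : s ∈ S) :
    ‖s - w‖ ^ 2 ≤ 2 * ρ * ⟪‖c‖⁻¹ • c, s - w⟫ := by
  obtain ⟨X, hX⟩ := hsc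
  have hcn : (0 : ℝ) < ‖c‖ := norm_pos_iff.mpr hc
  have h2ρ : (0:ℝ) < 2 * ρ := by linarith
  rcases X.eq_empty_or_nonempty with hXe | ⟨x₀, hx₀⟩
  · exfalso
    have hmem : w - ‖c‖⁻¹ • c ∈ S := by rw [hX, hXe]; simp
    have h1 := hmin _ hmem
    rw [inner_sub_right, real_inner_smul_right, real_inner_self_eq_norm_sq] at h1
    have h2 : ‖c‖⁻¹ * ‖c‖ ^ 2 = ‖c‖ := by
      rw [pow_two, ← mul_assoc, inv_mul_cancel₀ (ne_of_gt hcn), one_mul]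
    rw [h2] at h1; linarith
  · set n2 : ℝ := ‖s - w‖ ^ 2 with hn2
    have hn2nn : (0:ℝ) ≤ n2 := by rw [hn2]; positivity
    have hswle : ‖s - w‖ ≤ 2 * ρ := by
      have hwx : w ∈ Metric.closedBall x₀ ρ := by
        have := hw; rw [hX] at this; exact Set.mem_iInter₂.mp this x₀ hx₀
      have hsx : s ∈ Metric.closedBall x₀ ρ := by
        have := hs; rw [hX] at this; exact Set.mem_iInter₂.mp this x₀ hx₀
      rw [Metric.mem_closedBall, dist_eq_norm] at hwx hsx
      calc ‖s - w‖ = ‖s - x₀ - (w - x₀)‖ := by rw [sub_sub_sub_cancel_right]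
        _ ≤ ‖s - x₀‖ + ‖w - x₀‖ := norm_sub_le _ _
        _ ≤ 2 * ρ := by linarith
    have hn2le : n2 ≤ 4 * ρ ^ 2 := by
      rw [hn2]; nlinarith [norm_nonneg (s - w)]
    have key : ∀ lam : ℝ, 0 < lam → lam < 1 →
        (1 - lam) * n2 * ‖c‖ / (2 * ρ) ≤ ⟪c, s - w⟫ := by
      intro lam h0 h1
      have hll : (0:ℝ) < lam * (1 - lam) := mul_pos h0 (by linarith)
      set t : ℝ := lam * (1 - lam) * n2 / (2 * ρ) with ht
      have ht0 : 0 ≤ t := div_nonneg (mul_nonneg hll.le hn2nn) h2ρ.le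
      have h4 : lam * (1 - lam) ≤ 1 / 4 := by nlinarith [sq_nonneg (lam - 1/2)]
      have htρ : t ≤ ρ := by
        rw [ht, div_le_iff₀ h2ρ]
        nlinarith [mul_le_mul h4 hn2le hn2nn (by norm_num : (0:ℝ) ≤ 1/4), sq_nonneg ρ]
      set p : EuclideanSpace ℝ (Fin d) :=
        w + lam • (s - w) - (t * ‖c‖⁻¹) • c with hp
      have hpS : p ∈ S := by
        rw [hX]; refine Set.mem_iInter₂.mpr fun x hx => ?_
        have hwx : ‖w - x‖ ≤ ρ := by
          have := hw; rw [hX] at this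
          simpa [Metric.mem_closedBall, dist_eq_norm] using Set.mem_iInter₂.mp this x hx
        have hsx : ‖s - x‖ ≤ ρ := by
          have := hs; rw [hX] at this
          simpa [Metric.mem_closedBall, dist_eq_norm] using Set.mem_iInter₂.mp this x hx
        have hA : ‖w - x‖ ^ 2 ≤ ρ ^ 2 := pow_le_pow_left₀ (norm_nonneg _) hwx 2
        have hB : ‖s - x‖ ^ 2 ≤ ρ ^ 2 := pow_le_pow_left₀ (norm_nonneg _) hsx 2
        have hmx : ‖w + lam • (s - w) - x‖ ^ 2 ≤ ρ ^ 2 - 2 * ρ * t := by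
          have hexp : w + lam • (s - w) - x = (1 - lam) • (w - x) + lam • (s - x) := by
            module
          rw [hexp]
          have e1 : ‖(1 - lam) • (w - x) + lam • (s - x)‖ ^ 2
              = (1 - lam) ^ 2 * ‖w - x‖ ^ 2 + 2 * ((1 - lam) * lam) * ⟪w - x, s - x⟫
                + lam ^ 2 * ‖s - x‖ ^ 2 := by
            rw [norm_add_sq_real, norm_smul, norm_smul, real_inner_smul_left,
              real_inner_smul_right]
            simp [Real.norm_eq_abs, abs_of_nonneg h0.le,
              abs_of_nonneg (by linarith : (0:ℝ) ≤ 1 - lam)]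
            ring
          have e2 : n2 = ‖w - x‖ ^ 2 + ‖s - x‖ ^ 2 - 2 * ⟪w - x, s - x⟫ := by
            have hsw : s - w = (s - x) - (w - x) := by module
            rw [hn2, hsw, norm_sub_sq_real, real_inner_comm]; ring
          have htval : 2 * ρ * t = lam * (1 - lam) * n2 := by
            rw [ht]; field_simp
          rw [e1, htval, e2]
          nlinarith [mul_nonneg (by linarith : (0:ℝ) ≤ 1 - lam)
              (by linarith : (0:ℝ) ≤ ρ^2 - ‖w - x‖^2),
            mul_nonneg h0.le (by linarith : (0:ℝ) ≤ ρ^2 - ‖s - x‖^2)]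
        have hnorm_tc : ‖(t * ‖c‖⁻¹) • c‖ = t := by
          rw [norm_smul, Real.norm_eq_abs, abs_of_nonneg (by positivity), mul_assoc,
            inv_mul_cancel₀ (ne_of_gt hcn), mul_one]
        have hmx' : ‖w + lam • (s - w) - x‖ ≤ ρ - t := by
          nlinarith [norm_nonneg (w + lam • (s - w) - x), hmx, htρ, ht0]
        have htri : ‖p - x‖ ≤ ‖w + lam • (s - w) - x‖ + ‖(t * ‖c‖⁻¹) • c‖ := by
          have hpx : p - x = (w + lam • (s - w) - x) + (-((t * ‖c‖⁻¹) • c)) := by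
            rw [hp]; module
          rw [hpx]
          simpa using norm_add_le (w + lam • (s - w) - x) (-((t * ‖c‖⁻¹) • c))
        simp only [Metric.mem_closedBall, dist_eq_norm]
        rw [hnorm_tc] at htri
        linarith
      have hineq := hmin p hpS
      have hip : ⟪c, p⟫ = ⟪c, w⟫ + lam * ⟪c, s - w⟫ - t * ‖c‖ := by
        rw [hp, inner_sub_right, inner_add_right, real_inner_smul_right,
          real_inner_smul_right, real_inner_self_eq_norm_sq]
        field_simp
      rw [hip] at hineq
      have hTc : t * ‖c‖ ≤ lam * ⟪c, s - w⟫ := by linarith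
      rw [ht] at hTc
      have hA2 : lam * (1 - lam) * n2 * ‖c‖ ≤ lam * ⟪c, s - w⟫ * (2 * ρ) := by
        have hm := mul_le_mul_of_nonneg_right hTc h2ρ.le
        calc lam * (1 - lam) * n2 * ‖c‖
            = lam * (1 - lam) * n2 / (2 * ρ) * ‖c‖ * (2 * ρ) := by field_simp
          _ ≤ lam * ⟪c, s - w⟫ * (2 * ρ) := hm
      rw [div_le_iff₀ h2ρ]
      have := le_of_mul_le_mul_left
        (by linear_combination hA2 :
          lam * ((1 - lam) * n2 * ‖c‖) ≤ lam * (⟪c, s - w⟫ * (2 * ρ))) h0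
      linarith
    have hfin : n2 * ‖c‖ ≤ ⟪c, s - w⟫ * (2 * ρ) := by
      by_contra hcon
      push_neg at hcon
      set ε : ℝ := n2 * ‖c‖ - ⟪c, s - w⟫ * (2 * ρ) with hε
      have hε0 : 0 < ε := sub_pos.mpr hcon
      have hn2c : (0:ℝ) ≤ n2 * ‖c‖ := mul_nonneg hn2nn hcn.le
      set lam : ℝ := min (1/2) (ε / (n2 * ‖c‖ + 1)) with hlam
      have hlam0 : 0 < lam := lt_min (by norm_num) (by positivity)
      have hlam1 : lam < 1 := lt_of_le_of_lt (min_le_left _ _) (by norm_num)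
      have hkey := key lam hlam0 hlam1
      rw [div_le_iff₀ h2ρ] at hkey
      have hsm1 : lam * (n2 * ‖c‖) ≤ ε / (n2 * ‖c‖ + 1) * (n2 * ‖c‖) :=
        mul_le_mul_of_nonneg_right (min_le_right _ _) hn2c
      have hsm2 : ε / (n2 * ‖c‖ + 1) * (n2 * ‖c‖) < ε := by
        rw [div_mul_eq_mul_div, div_lt_iff₀ (by positivity)]
        nlinarith
      nlinarith [hkey, hsm1, hsm2]
    have hsm : ⟪‖c‖⁻¹ • c, s - w⟫ = ‖c‖⁻¹ * ⟪c, s - w⟫ := real_inner_smul_left _ _ _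
    rw [hsm]
    calc n2 = (n2 * ‖c‖) * ‖c‖⁻¹ := by field_simp
      _ ≤ (⟪c, s - w⟫ * (2 * ρ)) * ‖c‖⁻¹ := mul_le_mul_of_nonneg_right hfin (by positivity)
      _ = 2 * ρ * (‖c‖⁻¹ * ⟪c, s - w⟫) := by ring


/-- Minimizers over the same strongly convex set are `ρ`-Lipschitz in the normalized direction. -/
lemma minimizer_lipschitz {S : Set (EuclideanSpace ℝ (Fin d))} {ρ : ℝ} (hρ : 0 < ρ)
    (hsc : StronglyConvexSet ρ S) {c c' w w' : EuclideanSpace ℝ (Fin d)}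
    (hc : c ≠ 0) (hc' : c' ≠ 0) (hw : w ∈ S) (hmin : ∀ x ∈ S, ⟪c, w⟫ ≤ ⟪c, x⟫)
    (hw' : w' ∈ S) (hmin' : ∀ x ∈ S, ⟪c', w'⟫ ≤ ⟪c', x⟫) :
    ‖w - w'‖ ≤ ρ * ‖‖c‖⁻¹ • c - ‖c'‖⁻¹ • c'‖ := by
  have g1 := growth hρ hsc hc hw hmin hw'
  have g2 := growth hρ hsc hc' hw' hmin' hw
  have hsum : 2 * ‖w - w'‖ ^ 2 ≤ 2 * ρ * ⟪‖c‖⁻¹ • c - ‖c'‖⁻¹ • c', w' - w⟫ := by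
    rw [inner_sub_left]
    have hflip : ‖w - w'‖ ^ 2 = ‖w' - w‖ ^ 2 := by rw [norm_sub_rev]
    have hinner : ⟪‖c'‖⁻¹ • c', w - w'⟫ = - ⟪‖c'‖⁻¹ • c', w' - w⟫ := by
      rw [← inner_neg_right]; congr 1; module
    rw [hinner] at g2
    rw [hflip]; linarith
  have hcs : ⟪‖c‖⁻¹ • c - ‖c'‖⁻¹ • c', w' - w⟫ ≤ ‖‖c‖⁻¹ • c - ‖c'‖⁻¹ • c'‖ * ‖w' - w‖ :=
    real_inner_le_norm _ _
  have hnn : (0:ℝ) ≤ ‖w - w'‖ := norm_nonneg _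
  have hrev : ‖w' - w‖ = ‖w - w'‖ := norm_sub_rev _ _
  rw [hrev] at hcs
  rcases eq_or_lt_of_le hnn with h0 | h0
  · rw [← h0]; positivity
  · have : 2 * ‖w - w'‖ ^ 2 ≤ 2 * ρ * (‖‖c‖⁻¹ • c - ‖c'‖⁻¹ • c'‖ * ‖w - w'‖) := by
      refine hsum.trans (mul_le_mul_of_nonneg_left hcs (by linarith))
    nlinarith


/-- Minimizers of the same objective over two Hausdorff-close sets, one strongly convex. -/
lemma minimizer_transfer {S₁ S₂ : Set (EuclideanSpace ℝ (Fin d))} {ρ : ℝ} (hρ : 0 < ρ)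
    (hsc₁ : StronglyConvexSet ρ S₁)
    (hb₁ : Bornology.IsBounded S₁) (hb₂ : Bornology.IsBounded S₂)
    (hne₁ : S₁.Nonempty) (hne₂ : S₂.Nonempty)
    {c w' w₂ : EuclideanSpace ℝ (Fin d)} (hc : c ≠ 0)
    (hw' : w' ∈ S₁) (hmin' : ∀ x ∈ S₁, ⟪c, w'⟫ ≤ ⟪c, x⟫)
    (hw₂ : w₂ ∈ S₂) (hmin₂ : ∀ x ∈ S₂, ⟪c, w₂⟫ ≤ ⟪c, x⟫)
    {t : ℝ} (hd : Metric.hausdorffDist S₁ S₂ < t) :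
    ‖w' - w₂‖ ≤ t + 2 * Real.sqrt (ρ * t) := by
  have hcn : (0:ℝ) < ‖c‖ := norm_pos_iff.mpr hc
  have hd' : Metric.hausdorffDist S₂ S₁ < t := by rwa [Metric.hausdorffDist_comm]
  obtain ⟨p, hp, hpw₂⟩ := exists_close hw₂ hb₂ hb₁ hne₁ hd'
  obtain ⟨q, hq, hqw'⟩ := exists_close hw' hb₁ hb₂ hne₂ hd
  have hg := growth hρ hsc₁ hc hw' hmin' hp
  set u : EuclideanSpace ℝ (Fin d) := ‖c‖⁻¹ • c with hu
  have hun : ‖u‖ = 1 := norm_smul_inv_norm hc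
  have hip : ⟪u, p - w'⟫ ≤ 2 * t := by
    have e : p - w' = (p - w₂) + (w₂ - q) + (q - w') := by module
    rw [e, inner_add_right, inner_add_right]
    have i1 : ⟪u, p - w₂⟫ ≤ t := by
      calc ⟪u, p - w₂⟫ ≤ ‖u‖ * ‖p - w₂‖ := real_inner_le_norm _ _
        _ = ‖p - w₂‖ := by rw [hun, one_mul]
        _ ≤ t := by rw [norm_sub_rev]; exact hpw₂.le
    have i2 : ⟪u, w₂ - q⟫ ≤ 0 := by
      have hm := hmin₂ q hq
      rw [hu, real_inner_smul_left, inner_sub_right]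
      have hle : ⟪c, w₂⟫ - ⟪c, q⟫ ≤ 0 := by linarith
      have hinv : (0:ℝ) ≤ ‖c‖⁻¹ := by positivity
      exact mul_nonpos_of_nonneg_of_nonpos hinv hle
    have i3 : ⟪u, q - w'⟫ ≤ t := by
      calc ⟪u, q - w'⟫ ≤ ‖u‖ * ‖q - w'‖ := real_inner_le_norm _ _
        _ = ‖q - w'‖ := by rw [hun, one_mul]
        _ ≤ t := by rw [norm_sub_rev]; exact hqw'.le
    linarith
  have ht0 : (0:ℝ) ≤ t := le_trans Metric.hausdorffDist_nonneg hd.le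
  have hsq : ‖p - w'‖ ^ 2 ≤ 4 * (ρ * t) := by
    calc ‖p - w'‖ ^ 2 ≤ 2 * ρ * ⟪u, p - w'⟫ := hg
      _ ≤ 2 * ρ * (2 * t) := mul_le_mul_of_nonneg_left hip (by linarith)
      _ = 4 * (ρ * t) := by ring
  have hnle : ‖p - w'‖ ≤ 2 * Real.sqrt (ρ * t) := by
    have h1 : ‖p - w'‖ = Real.sqrt (‖p - w'‖ ^ 2) := by
      rw [Real.sqrt_sq (norm_nonneg _)]
    rw [h1]
    calc Real.sqrt (‖p - w'‖ ^ 2) ≤ Real.sqrt (4 * (ρ * t)) := Real.sqrt_le_sqrt hsq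
      _ = Real.sqrt 4 * Real.sqrt (ρ * t) := Real.sqrt_mul (by norm_num) _
      _ = 2 * Real.sqrt (ρ * t) := by
          rw [show Real.sqrt 4 = 2 from by
            rw [show (4:ℝ) = 2^2 by norm_num, Real.sqrt_sq (by norm_num : (0:ℝ) ≤ 2)]]
  calc ‖w' - w₂‖ = ‖(w' - p) + (p - w₂)‖ := by congr 1; module
    _ ≤ ‖w' - p‖ + ‖p - w₂‖ := norm_add_le _ _
    _ ≤ 2 * Real.sqrt (ρ * t) + t := by
        have h5 := hnle; rw [norm_sub_rev] at h5
        have h2 : ‖p - w₂‖ ≤ t := by rw [norm_sub_rev]; exact hpw₂.le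
        linarith
    _ = t + 2 * Real.sqrt (ρ * t) := by ring

/-- Distance between the two minimizers (asymmetric version using `ρ₁`). -/
lemma minimizer_dist_aux {S₁ S₂ : Set (EuclideanSpace ℝ (Fin d))} {ρ₁ : ℝ} (hρ₁ : 0 < ρ₁)
    (hsc₁ : StronglyConvexSet ρ₁ S₁)
    (hcomp₁ : IsCompact S₁) (hcomp₂ : IsCompact S₂)
    (hne₁ : S₁.Nonempty) (hne₂ : S₂.Nonempty)
    {c₁ c₂ w₁ w₂ : EuclideanSpace ℝ (Fin d)} (hc₁ : c₁ ≠ 0) (hc₂ : c₂ ≠ 0)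
    (hw₁ : w₁ ∈ S₁) (hmin₁ : ∀ x ∈ S₁, ⟪c₁, w₁⟫ ≤ ⟪c₁, x⟫)
    (hw₂ : w₂ ∈ S₂) (hmin₂ : ∀ x ∈ S₂, ⟪c₂, w₂⟫ ≤ ⟪c₂, x⟫)
    {t : ℝ} (hd : Metric.hausdorffDist S₁ S₂ < t) :
    ‖w₁ - w₂‖ ≤ ρ₁ * ‖‖c₁‖⁻¹ • c₁ - ‖c₂‖⁻¹ • c₂‖ + t + 2 * Real.sqrt (ρ₁ * t) := by
  obtain ⟨w', hw', hmin''⟩ := hcomp₁.exists_isMinOn hne₁ (inner_cont c₂).continuousOn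
  have hmin' : ∀ x ∈ S₁, ⟪c₂, w'⟫ ≤ ⟪c₂, x⟫ := fun x hx => hmin'' hx
  have h1 : ‖w₁ - w'‖ ≤ ρ₁ * ‖‖c₁‖⁻¹ • c₁ - ‖c₂‖⁻¹ • c₂‖ :=
    minimizer_lipschitz hρ₁ hsc₁ hc₁ hc₂ hw₁ hmin₁ hw' hmin'
  have h2 : ‖w' - w₂‖ ≤ t + 2 * Real.sqrt (ρ₁ * t) :=
    minimizer_transfer hρ₁ hsc₁ hcomp₁.isBounded hcomp₂.isBounded hne₁ hne₂ hc₂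
      hw' hmin' hw₂ hmin₂ hd
  calc ‖w₁ - w₂‖ = ‖(w₁ - w') + (w' - w₂)‖ := by congr 1; module
    _ ≤ ‖w₁ - w'‖ + ‖w' - w₂‖ := norm_add_le _ _
    _ ≤ _ := by linarith


lemma supp_le_supp_add {S₁ S₂ : Set (EuclideanSpace ℝ (Fin d))}
    (hcomp₁ : IsCompact S₁) (hcomp₂ : IsCompact S₂)
    (hne₁ : S₁.Nonempty) (hne₂ : S₂.Nonempty)
    (u : EuclideanSpace ℝ (Fin d)) {t : ℝ}
    (hd : Metric.hausdorffDist S₁ S₂ < t) :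
    supp S₁ u ≤ supp S₂ u + t * ‖u‖ := by
  refine csSup_le (hne₁.image _) ?_
  rintro x ⟨a, ha, rfl⟩
  show ⟪u, a⟫ ≤ supp S₂ u + t * ‖u‖
  obtain ⟨b, hb, hab⟩ := exists_close ha hcomp₁.isBounded hcomp₂.isBounded hne₂ hd
  have h1 : ⟪u, a⟫ = ⟪u, b⟫ + ⟪u, a - b⟫ := by
    rw [inner_sub_right]; ring
  have h2 : ⟪u, a - b⟫ ≤ ‖u‖ * ‖a - b‖ := real_inner_le_norm _ _
  have h3 : ‖u‖ * ‖a - b‖ ≤ ‖u‖ * t := mul_le_mul_of_nonneg_left hab.le (norm_nonneg _)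
  have h4 : ⟪u, b⟫ ≤ supp S₂ u := le_supp hcomp₂ hne₂ hb
  rw [h1]; nlinarith [h2, h3, h4]

/-- Route A : pairing `(diam S₁, c₂)`. -/
lemma spo_diff_routeA {S₁ S₂ : Set (EuclideanSpace ℝ (Fin d))}
    (hcomp₁ : IsCompact S₁) (hcomp₂ : IsCompact S₂)
    (hne₁ : S₁.Nonempty) (hne₂ : S₂.Nonempty)
    {c₁ c₂ chat w₁ w₂ : EuclideanSpace ℝ (Fin d)}
    (hw₁ : w₁ ∈ S₁) (hmin₁ : ∀ x ∈ S₁, ⟪c₁, w₁⟫ ≤ ⟪c₁, x⟫)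
    (hw₂ : w₂ ∈ S₂) (hmin₂ : ∀ x ∈ S₂, ⟪c₂, w₂⟫ ≤ ⟪c₂, x⟫)
    {t : ℝ} (hd : Metric.hausdorffDist S₁ S₂ < t) :
    spoPlus S₁ chat c₁ w₁ - spoPlus S₂ chat c₂ w₂ ≤
      2 * ‖chat‖ * ‖w₁ - w₂‖ + Metric.diam S₁ * ‖c₁ - c₂‖ +
        t * (‖c₂ - (2:ℝ) • chat‖ + ‖c₂‖) := by
  set u₁ : EuclideanSpace ℝ (Fin d) := c₁ - (2:ℝ) • chat with hu₁
  set u₂ : EuclideanSpace ℝ (Fin d) := c₂ - (2:ℝ) • chat with hu₂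
  obtain ⟨m₁, hm₁, hmax₁, hsup₁⟩ := exists_max S₁ hcomp₁ hne₁ u₁
  obtain ⟨b, hb, hmb⟩ := exists_close hm₁ hcomp₁.isBounded hcomp₂.isBounded hne₂ hd
  obtain ⟨q, hq, hwq⟩ := exists_close hw₁ hcomp₁.isBounded hcomp₂.isBounded hne₂ hd
  rw [spoPlus_eq hw₁ hmin₁, spoPlus_eq hw₂ hmin₂, ← hu₁, ← hu₂, hsup₁]
  have hsupp2 : ⟪u₂, m₁⟫ ≤ supp S₂ u₂ + t * ‖u₂‖ := by
    have h1 : ⟪u₂, m₁⟫ = ⟪u₂, b⟫ + ⟪u₂, m₁ - b⟫ := by rw [inner_sub_right]; ring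
    have h2 : ⟪u₂, m₁ - b⟫ ≤ ‖u₂‖ * ‖m₁ - b‖ := real_inner_le_norm _ _
    have h3 : ‖u₂‖ * ‖m₁ - b‖ ≤ ‖u₂‖ * t := mul_le_mul_of_nonneg_left hmb.le (norm_nonneg _)
    have h4 : ⟪u₂, b⟫ ≤ supp S₂ u₂ := le_supp hcomp₂ hne₂ hb
    nlinarith
  have hz : ⟪c₂, w₂⟫ ≤ ⟪c₂, w₁⟫ + t * ‖c₂‖ := by
    have h1 := hmin₂ q hq
    have h2 : ⟪c₂, q⟫ = ⟪c₂, w₁⟫ + ⟪c₂, q - w₁⟫ := by rw [inner_sub_right]; ring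
    have h3 : ⟪c₂, q - w₁⟫ ≤ ‖c₂‖ * ‖q - w₁‖ := real_inner_le_norm _ _
    have h4 : ‖c₂‖ * ‖q - w₁‖ ≤ ‖c₂‖ * t := by
      refine mul_le_mul_of_nonneg_left ?_ (norm_nonneg _)
      rw [norm_sub_rev]; exact hwq.le
    nlinarith
  have hdm : ⟪c₁ - c₂, m₁ - w₁⟫ ≤ Metric.diam S₁ * ‖c₁ - c₂‖ := by
    have h1 : ⟪c₁ - c₂, m₁ - w₁⟫ ≤ ‖c₁ - c₂‖ * ‖m₁ - w₁‖ := real_inner_le_norm _ _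
    have h2 : ‖m₁ - w₁‖ ≤ Metric.diam S₁ := by
      rw [← dist_eq_norm]; exact Metric.dist_le_diam_of_mem hcomp₁.isBounded hm₁ hw₁
    nlinarith [norm_nonneg (c₁ - c₂), norm_nonneg (m₁ - w₁)]
  have hsplit : ⟪u₁, m₁⟫ - ⟪u₁, w₁⟫ = ⟪c₁ - c₂, m₁ - w₁⟫ + (⟪u₂, m₁⟫ - ⟪u₂, w₁⟫) := by
    have e : (u₁ : EuclideanSpace ℝ (Fin d)) = u₂ + (c₁ - c₂) := by rw [hu₁, hu₂]; module
    rw [e, inner_add_left, inner_add_left]; simp only [inner_sub_right]; ring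
  have hwterm : ⟪u₂, w₂⟫ - ⟪u₂, w₁⟫ ≤ t * ‖c₂‖ + 2 * ‖chat‖ * ‖w₁ - w₂‖ := by
    have e : ⟪u₂, w₂⟫ - ⟪u₂, w₁⟫ = (⟪c₂, w₂⟫ - ⟪c₂, w₁⟫) - 2 * ⟪chat, w₂ - w₁⟫ := by
      rw [hu₂]; simp only [inner_sub_left, inner_sub_right, real_inner_smul_left]; ring
    have h2 : -⟪chat, w₂ - w₁⟫ ≤ ‖chat‖ * ‖w₁ - w₂‖ := by
      have h3 : ⟪chat, w₁ - w₂⟫ ≤ ‖chat‖ * ‖w₁ - w₂‖ := real_inner_le_norm _ _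
      have e2 : ⟪chat, w₁ - w₂⟫ = -⟪chat, w₂ - w₁⟫ := by
        rw [← inner_neg_right]; congr 1; module
      linarith
    rw [e]; linarith
  have hfin : ⟪u₂, m₁⟫ - supp S₂ u₂ ≤ t * ‖u₂‖ := by linarith
  linarith [hsplit, hfin, hwterm, hdm]

/-- Route B : pairing `(diam S₂, c₁)`. -/
lemma spo_diff_routeB {S₁ S₂ : Set (EuclideanSpace ℝ (Fin d))}
    (hcomp₁ : IsCompact S₁) (hcomp₂ : IsCompact S₂)
    (hne₁ : S₁.Nonempty) (hne₂ : S₂.Nonempty)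
    {c₁ c₂ chat w₁ w₂ : EuclideanSpace ℝ (Fin d)}
    (hw₁ : w₁ ∈ S₁) (hmin₁ : ∀ x ∈ S₁, ⟪c₁, w₁⟫ ≤ ⟪c₁, x⟫)
    (hw₂ : w₂ ∈ S₂) (hmin₂ : ∀ x ∈ S₂, ⟪c₂, w₂⟫ ≤ ⟪c₂, x⟫)
    {t : ℝ} (hd : Metric.hausdorffDist S₁ S₂ < t) :
    spoPlus S₁ chat c₁ w₁ - spoPlus S₂ chat c₂ w₂ ≤
      2 * ‖chat‖ * ‖w₁ - w₂‖ + Metric.diam S₂ * ‖c₁ - c₂‖ +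
        t * (‖c₁ - (2:ℝ) • chat‖ + ‖c₁‖) := by
  set u₁ : EuclideanSpace ℝ (Fin d) := c₁ - (2:ℝ) • chat with hu₁
  set u₂ : EuclideanSpace ℝ (Fin d) := c₂ - (2:ℝ) • chat with hu₂
  obtain ⟨n, hn, hmaxn, hsupn⟩ := exists_max S₂ hcomp₂ hne₂ u₁
  obtain ⟨n', hn', hminn''⟩ := hcomp₂.exists_isMinOn hne₂ (inner_cont c₁).continuousOn
  have hminn' : ∀ x ∈ S₂, ⟪c₁, n'⟫ ≤ ⟪c₁, x⟫ := fun x hx => hminn'' hx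
  obtain ⟨q, hq, hwq⟩ := exists_close hw₁ hcomp₁.isBounded hcomp₂.isBounded hne₂ hd
  rw [spoPlus_eq hw₁ hmin₁, spoPlus_eq hw₂ hmin₂, ← hu₁, ← hu₂]
  have hs1 : supp S₁ u₁ ≤ supp S₂ u₁ + t * ‖u₁‖ :=
    supp_le_supp_add hcomp₁ hcomp₂ hne₁ hne₂ u₁ hd
  have hs2 : ⟪u₂, n⟫ ≤ supp S₂ u₂ := le_supp hcomp₂ hne₂ hn
  have hzpart : ⟪c₂, w₂⟫ - ⟪c₁, w₁⟫ ≤ t * ‖c₁‖ + (⟪c₂, n'⟫ - ⟪c₁, n'⟫) := by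
    have h1 : ⟪c₂, w₂⟫ ≤ ⟪c₂, n'⟫ := hmin₂ n' hn'
    have h2 : ⟪c₁, n'⟫ ≤ ⟪c₁, q⟫ := hminn' q hq
    have h3 : ⟪c₁, q⟫ = ⟪c₁, w₁⟫ + ⟪c₁, q - w₁⟫ := by rw [inner_sub_right]; ring
    have h4 : ⟪c₁, q - w₁⟫ ≤ ‖c₁‖ * ‖q - w₁‖ := real_inner_le_norm _ _
    have h5 : ‖c₁‖ * ‖q - w₁‖ ≤ ‖c₁‖ * t := by
      refine mul_le_mul_of_nonneg_left ?_ (norm_nonneg _)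
      rw [norm_sub_rev]; exact hwq.le
    nlinarith
  have hdm : ⟪c₁ - c₂, n⟫ + (⟪c₂, n'⟫ - ⟪c₁, n'⟫) ≤ Metric.diam S₂ * ‖c₁ - c₂‖ := by
    have e : ⟪c₁ - c₂, n⟫ + (⟪c₂, n'⟫ - ⟪c₁, n'⟫) = ⟪c₁ - c₂, n - n'⟫ := by
      simp only [inner_sub_right, inner_sub_left]; ring
    rw [e]
    have h1 : ⟪c₁ - c₂, n - n'⟫ ≤ ‖c₁ - c₂‖ * ‖n - n'‖ := real_inner_le_norm _ _
    have h2 : ‖n - n'‖ ≤ Metric.diam S₂ := by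
      rw [← dist_eq_norm]; exact Metric.dist_le_diam_of_mem hcomp₂.isBounded hn hn'
    nlinarith [norm_nonneg (c₁ - c₂), norm_nonneg (n - n')]
  have hnn : supp S₂ u₁ - supp S₂ u₂ ≤ ⟪c₁ - c₂, n⟫ := by
    have e : ⟪u₁, n⟫ - ⟪u₂, n⟫ = ⟪c₁ - c₂, n⟫ := by
      rw [hu₁, hu₂]; simp only [inner_sub_left, real_inner_smul_left]; ring
    rw [hsupn]; linarith
  have hwterm : - ⟪u₁, w₁⟫ + ⟪u₂, w₂⟫
      ≤ (⟪c₂, w₂⟫ - ⟪c₁, w₁⟫) + 2 * ‖chat‖ * ‖w₁ - w₂‖ := by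
    have e : - ⟪u₁, w₁⟫ + ⟪u₂, w₂⟫
        = (⟪c₂, w₂⟫ - ⟪c₁, w₁⟫) + 2 * ⟪chat, w₁ - w₂⟫ := by
      rw [hu₁, hu₂]; simp only [inner_sub_left, inner_sub_right, real_inner_smul_left]; ring
    have h2 : ⟪chat, w₁ - w₂⟫ ≤ ‖chat‖ * ‖w₁ - w₂‖ := real_inner_le_norm _ _
    rw [e]; linarith
  linarith [hs1, hs2, hzpart, hdm, hnn, hwterm]


lemma supp_eq_of_max {S : Set (EuclideanSpace ℝ (Fin d))} {u m : EuclideanSpace ℝ (Fin d)}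
    (hm : m ∈ S) (hmax : ∀ w ∈ S, ⟪u, w⟫ ≤ ⟪u, m⟫) : supp S u = ⟪u, m⟫ := by
  refine le_antisymm (csSup_le (Set.Nonempty.image _ ⟨m, hm⟩) ?_)
    (le_csSup ⟨⟪u, m⟫, ?_⟩ ⟨m, hm, rfl⟩)
  · rintro x ⟨w, hw, rfl⟩; exact hmax w hw
  · rintro x ⟨w, hw, rfl⟩; exact hmax w hw

lemma setTranslate_compact {S : Set (EuclideanSpace ℝ (Fin d))}
    (hS : IsCompact S) (v : EuclideanSpace ℝ (Fin d)) : IsCompact (setTranslate S v) :=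
  hS.image (continuous_id.add continuous_const)

lemma setTranslate_nonempty {S : Set (EuclideanSpace ℝ (Fin d))}
    (hS : S.Nonempty) (v : EuclideanSpace ℝ (Fin d)) : (setTranslate S v).Nonempty :=
  hS.image _

lemma setTranslate_diam (S : Set (EuclideanSpace ℝ (Fin d)))
    (v : EuclideanSpace ℝ (Fin d)) : Metric.diam (setTranslate S v) = Metric.diam S :=
  (Isometry.of_dist_eq fun a b => dist_add_right a b v).diam_image S

lemma setTranslate_sc {S : Set (EuclideanSpace ℝ (Fin d))} {ρ : ℝ}
    (hsc : StronglyConvexSet ρ S) (v : EuclideanSpace ℝ (Fin d)) :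
    StronglyConvexSet ρ (setTranslate S v) := by
  obtain ⟨X, rfl⟩ := hsc
  refine ⟨(fun x => x + v) '' X, ?_⟩
  ext z
  constructor
  · rintro ⟨w, hw, rfl⟩
    refine Set.mem_iInter₂.mpr ?_
    rintro y ⟨x, hx, rfl⟩
    have hx' := Set.mem_iInter₂.mp hw x hx
    rw [Metric.mem_closedBall] at hx' ⊢
    rwa [dist_add_right]
  · intro hz
    refine ⟨z - v, ?_, by module⟩
    refine Set.mem_iInter₂.mpr fun x hx => ?_
    have hzx := Set.mem_iInter₂.mp hz (x + v) ⟨x, hx, rfl⟩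
    rw [Metric.mem_closedBall] at hzx ⊢
    rw [dist_eq_norm] at hzx ⊢
    calc ‖z - v - x‖ = ‖z - (x + v)‖ := by congr 1; module
      _ ≤ ρ := hzx

lemma setTranslate_min {S : Set (EuclideanSpace ℝ (Fin d))}
    {c w : EuclideanSpace ℝ (Fin d)} (hmin : ∀ x ∈ S, ⟪c, w⟫ ≤ ⟪c, x⟫)
    (v : EuclideanSpace ℝ (Fin d)) :
    ∀ x ∈ setTranslate S v, ⟪c, w + v⟫ ≤ ⟪c, x⟫ := by
  rintro x ⟨y, hy, rfl⟩
  rw [inner_add_right, inner_add_right]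
  linarith [hmin y hy]

lemma spoPlus_translate {S : Set (EuclideanSpace ℝ (Fin d))}
    (hS : IsCompact S) (hne : S.Nonempty)
    {chat c w : EuclideanSpace ℝ (Fin d)} (hw : w ∈ S)
    (hmin : ∀ x ∈ S, ⟪c, w⟫ ≤ ⟪c, x⟫) (v : EuclideanSpace ℝ (Fin d)) :
    spoPlus (setTranslate S v) chat c (w + v) = spoPlus S chat c w := by
  set u : EuclideanSpace ℝ (Fin d) := c - (2:ℝ) • chat with hu
  obtain ⟨m, hm, hmax, hsup⟩ := exists_max S hS hne u
  have hsup' : supp (setTranslate S v) u = ⟪u, m + v⟫ := by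
    refine supp_eq_of_max ⟨m, hm, rfl⟩ ?_
    rintro x ⟨y, hy, rfl⟩
    rw [inner_add_right, inner_add_right]
    linarith [hmax y hy]
  have hz := zstar_eq hw hmin
  have hz' : zstar (setTranslate S v) c = ⟪c, w + v⟫ :=
    zstar_eq ⟨w, hw, rfl⟩ (setTranslate_min hmin v)
  rw [spoPlus, spoPlus, ← hu, hz, hz', hsup, hsup']
  rw [inner_add_right, inner_add_right, inner_add_right]
  have huv : ⟪u, v⟫ = ⟪c, v⟫ - 2 * ⟪chat, v⟫ := by
    rw [hu, inner_sub_left, real_inner_smul_left]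
  linarith [huv]

/-- Distance between minimizers over two Hausdorff-close strongly convex sets. -/
lemma minimizer_dist {S₁ S₂ : Set (EuclideanSpace ℝ (Fin d))} {ρ₁ ρ₂ : ℝ}
    (hρ₁ : 0 < ρ₁) (hρ₂ : 0 < ρ₂)
    (hsc₁ : StronglyConvexSet ρ₁ S₁) (hsc₂ : StronglyConvexSet ρ₂ S₂)
    (hcomp₁ : IsCompact S₁) (hcomp₂ : IsCompact S₂)
    (hne₁ : S₁.Nonempty) (hne₂ : S₂.Nonempty)
    {c₁ c₂ w₁ w₂ : EuclideanSpace ℝ (Fin d)} (hc₁ : c₁ ≠ 0) (hc₂ : c₂ ≠ 0)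
    (hw₁ : w₁ ∈ S₁) (hmin₁ : ∀ x ∈ S₁, ⟪c₁, w₁⟫ ≤ ⟪c₁, x⟫)
    (hw₂ : w₂ ∈ S₂) (hmin₂ : ∀ x ∈ S₂, ⟪c₂, w₂⟫ ≤ ⟪c₂, x⟫)
    {t : ℝ} (hd : Metric.hausdorffDist S₁ S₂ < t) :
    ‖w₁ - w₂‖ ≤ min ρ₁ ρ₂ * ‖‖c₁‖⁻¹ • c₁ - ‖c₂‖⁻¹ • c₂‖ + t
      + 2 * Real.sqrt (min ρ₁ ρ₂ * t) := by
  rcases le_total ρ₁ ρ₂ with h | h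
  · rw [min_eq_left h]
    exact minimizer_dist_aux hρ₁ hsc₁ hcomp₁ hcomp₂ hne₁ hne₂ hc₁ hc₂ hw₁ hmin₁ hw₂ hmin₂ hd
  · rw [min_eq_right h]
    have hd' : Metric.hausdorffDist S₂ S₁ < t := by rwa [Metric.hausdorffDist_comm]
    have hh := minimizer_dist_aux hρ₂ hsc₂ hcomp₂ hcomp₁ hne₂ hne₁ hc₂ hc₁ hw₂ hmin₂ hw₁ hmin₁ hd'
    rw [norm_sub_rev, norm_sub_rev (‖c₂‖⁻¹ • c₂)] at hh
    exact hh

/-- Combined two-set SPO+ discrepancy bound. -/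
lemma two_set_bound {S₁ S₂ : Set (EuclideanSpace ℝ (Fin d))} {ρ₁ ρ₂ : ℝ}
    (hρ₁ : 0 < ρ₁) (hρ₂ : 0 < ρ₂)
    (hsc₁ : StronglyConvexSet ρ₁ S₁) (hsc₂ : StronglyConvexSet ρ₂ S₂)
    (hcomp₁ : IsCompact S₁) (hcomp₂ : IsCompact S₂)
    (hne₁ : S₁.Nonempty) (hne₂ : S₂.Nonempty)
    {c₁ c₂ chat w₁ w₂ : EuclideanSpace ℝ (Fin d)} (hc₁ : c₁ ≠ 0) (hc₂ : c₂ ≠ 0)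
    (hw₁ : w₁ ∈ S₁) (hmin₁ : ∀ x ∈ S₁, ⟪c₁, w₁⟫ ≤ ⟪c₁, x⟫)
    (hw₂ : w₂ ∈ S₂) (hmin₂ : ∀ x ∈ S₂, ⟪c₂, w₂⟫ ≤ ⟪c₂, x⟫)
    {t : ℝ} (hd : Metric.hausdorffDist S₁ S₂ < t) :
    |spoPlus S₁ chat c₁ w₁ - spoPlus S₂ chat c₂ w₂| ≤
      2 * ‖chat‖ * (min ρ₁ ρ₂ * ‖‖c₁‖⁻¹ • c₁ - ‖c₂‖⁻¹ • c₂‖ + t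
        + 2 * Real.sqrt (min ρ₁ ρ₂ * t)) +
      min (Metric.diam S₁ * ‖c₁ - c₂‖ + t * (‖c₂ - (2:ℝ) • chat‖ + ‖c₂‖))
          (Metric.diam S₂ * ‖c₁ - c₂‖ + t * (‖c₁ - (2:ℝ) • chat‖ + ‖c₁‖)) := by
  have hd' : Metric.hausdorffDist S₂ S₁ < t := by rwa [Metric.hausdorffDist_comm]
  set C : ℝ := 2 * ‖chat‖ * (min ρ₁ ρ₂ * ‖‖c₁‖⁻¹ • c₁ - ‖c₂‖⁻¹ • c₂‖ + t
    + 2 * Real.sqrt (min ρ₁ ρ₂ * t)) with hC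
  set A : ℝ := Metric.diam S₁ * ‖c₁ - c₂‖ + t * (‖c₂ - (2:ℝ) • chat‖ + ‖c₂‖) with hA
  set B : ℝ := Metric.diam S₂ * ‖c₁ - c₂‖ + t * (‖c₁ - (2:ℝ) • chat‖ + ‖c₁‖) with hB
  have hW : ‖w₁ - w₂‖ ≤ min ρ₁ ρ₂ * ‖‖c₁‖⁻¹ • c₁ - ‖c₂‖⁻¹ • c₂‖ + t
      + 2 * Real.sqrt (min ρ₁ ρ₂ * t) :=
    minimizer_dist hρ₁ hρ₂ hsc₁ hsc₂ hcomp₁ hcomp₂ hne₁ hne₂ hc₁ hc₂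
      hw₁ hmin₁ hw₂ hmin₂ hd
  have hchat : (0:ℝ) ≤ 2 * ‖chat‖ := by positivity
  have hCW : 2 * ‖chat‖ * ‖w₁ - w₂‖ ≤ C := by
    rw [hC]; exact mul_le_mul_of_nonneg_left hW hchat
  have hCW' : 2 * ‖chat‖ * ‖w₂ - w₁‖ ≤ C := by rwa [norm_sub_rev]
  rw [show C + min A B = min (C + A) (C + B) from (min_add_add_left C A B).symm]
  rw [abs_sub_le_iff]
  constructor
  · refine le_min ?_ ?_
    · have hr := spo_diff_routeA (chat := chat) hcomp₁ hcomp₂ hne₁ hne₂ hw₁ hmin₁ hw₂ hmin₂ hd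
      rw [hA]; linarith
    · have hr := spo_diff_routeB (chat := chat) hcomp₁ hcomp₂ hne₁ hne₂ hw₁ hmin₁ hw₂ hmin₂ hd
      rw [hB]; linarith
  · refine le_min ?_ ?_
    · have hr := spo_diff_routeB (chat := chat) hcomp₂ hcomp₁ hne₂ hne₁ hw₂ hmin₂ hw₁ hmin₁ hd'
      rw [norm_sub_rev c₂ c₁] at hr
      rw [hA]; linarith
    · have hr := spo_diff_routeA (chat := chat) hcomp₂ hcomp₁ hne₂ hne₁ hw₂ hmin₂ hw₁ hmin₁ hd'
      rw [norm_sub_rev c₂ c₁] at hr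
      rw [hB]; linarith

end SPOAux

/-- **Strongly convex refinement of the SPO+ discrepancy bound (Corollary 1).** -/
theorem spoPlus_heterogeneity_bound_strongly_convex {d : ℕ}
    (Sref Scl : Set (EuclideanSpace ℝ (Fin d)))
    (hneref : Sref.Nonempty) (hnecl : Scl.Nonempty)
    (hcompref : IsCompact Sref) (hcompcl : IsCompact Scl)
    (ρref ρcl : ℝ) (hρref : 0 < ρref) (hρcl : 0 < ρcl)
    (hscref : StronglyConvexSet ρref Sref) (hsccl : StronglyConvexSet ρcl Scl)
    (cref ccl : EuclideanSpace ℝ (Fin d)) (hcref : cref ≠ 0) (hccl : ccl ≠ 0)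
    (chat : EuclideanSpace ℝ (Fin d))
    (wref : EuclideanSpace ℝ (Fin d)) (hwrefmem : wref ∈ Sref)
    (hwrefmin : ∀ w ∈ Sref, ⟪cref, wref⟫ ≤ ⟪cref, w⟫)
    (wcl : EuclideanSpace ℝ (Fin d)) (hwclmem : wcl ∈ Scl)
    (hwclmin : ∀ w ∈ Scl, ⟪ccl, wcl⟫ ≤ ⟪ccl, w⟫) :
    |spoPlus Sref chat cref wref - spoPlus Scl chat ccl wcl| ≤
      2 * ‖chat‖ * (min ρref ρcl * ‖‖cref‖⁻¹ • cref - ‖ccl‖⁻¹ • ccl‖ +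
        shapeDist Sref Scl + 2 * Real.sqrt (min ρref ρcl * shapeDist Sref Scl)) +
      min
        (Metric.diam Sref * ‖cref - ccl‖ +
          shapeDist Sref Scl * (‖ccl - (2 : ℝ) • chat‖ + ‖ccl‖))
        (Metric.diam Scl * ‖cref - ccl‖ +
          shapeDist Sref Scl * (‖cref - (2 : ℝ) • chat‖ + ‖cref‖)) := by
  set δ : ℝ := shapeDist Sref Scl with hδ
  set L : ℝ := |spoPlus Sref chat cref wref - spoPlus Scl chat ccl wcl| with hL
  set F : ℝ → ℝ := fun t =>
    2 * ‖chat‖ * (min ρref ρcl * ‖‖cref‖⁻¹ • cref - ‖ccl‖⁻¹ • ccl‖ + t +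
      2 * Real.sqrt (min ρref ρcl * t)) +
    min (Metric.diam Sref * ‖cref - ccl‖ + t * (‖ccl - (2 : ℝ) • chat‖ + ‖ccl‖))
        (Metric.diam Scl * ‖cref - ccl‖ + t * (‖cref - (2 : ℝ) • chat‖ + ‖cref‖))
    with hF
  have hkey : ∀ t ∈ Set.Ioi δ, L ≤ F t := by
    intro t ht
    obtain ⟨v, hv⟩ : ∃ v, Metric.hausdorffDist Sref (setTranslate Scl v) < t :=
      exists_lt_of_ciInf_lt (show shapeDist Sref Scl < t from ht)
    have hinv := SPOAux.spoPlus_translate hcompcl hnecl hwclmem hwclmin v (chat := chat)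
    have hb := SPOAux.two_set_bound hρref hρcl hscref (SPOAux.setTranslate_sc hsccl v)
      hcompref (SPOAux.setTranslate_compact hcompcl v) hneref
      (SPOAux.setTranslate_nonempty hnecl v)
      hcref hccl hwrefmem hwrefmin (⟨wcl, hwclmem, rfl⟩ : wcl + v ∈ setTranslate Scl v)
      (SPOAux.setTranslate_min hwclmin v) (chat := chat) hv
    rw [hinv, SPOAux.setTranslate_diam] at hb
    exact hb
  have hδ0 : 0 ≤ δ := by
    rw [hδ, shapeDist]
    exact Real.iInf_nonneg fun v => Metric.hausdorffDist_nonneg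
  have hcont : ContinuousAt F δ := by
    have hsqrt : Continuous fun t : ℝ => Real.sqrt (min ρref ρcl * t) :=
      Real.continuous_sqrt.comp (continuous_const.mul continuous_id)
    have h1 : Continuous fun t : ℝ =>
        2 * ‖chat‖ * (min ρref ρcl * ‖‖cref‖⁻¹ • cref - ‖ccl‖⁻¹ • ccl‖ + t +
          2 * Real.sqrt (min ρref ρcl * t)) :=
      continuous_const.mul (((continuous_const.add continuous_id).add
        (continuous_const.mul hsqrt)))
    have h2 : Continuous fun t : ℝ =>
        min (Metric.diam Sref * ‖cref - ccl‖ + t * (‖ccl - (2 : ℝ) • chat‖ + ‖ccl‖))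
            (Metric.diam Scl * ‖cref - ccl‖ + t * (‖cref - (2 : ℝ) • chat‖ + ‖cref‖)) :=
      (continuous_const.add (continuous_id.mul continuous_const)).min
        (continuous_const.add (continuous_id.mul continuous_const))
    exact (h1.add h2).continuousAt
  have hfin : L ≤ F δ :=
    ge_of_tendsto (hcont.tendsto.mono_left (nhdsWithin_le_nhds (s := Set.Ioi δ)))
      (eventually_nhdsWithin_of_forall hkey)
  exact hfin
end

section
/- Lipschitzness of the SPO+ loss in the prediction argument: let S ⊆ ℝ^d be a nonempty compact set with diameter D(S), fix c ∈ ℝ^d, and let w⋆ ∈ S be a minimizer of w ↦ ⟨c, w⟩ over S. Then for all ĉ₁, ĉ₂ ∈ ℝ^d, |ℓ_S(ĉ₁, c) − ℓ_S(ĉ₂, c)| ≤ 2 D(S) · ‖ĉ₁ − ĉ₂‖, where both losses are computed with the same minimizer w⋆. -/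
open scoped RealInnerProductSpace

lemma spoPlus_one_side {d : ℕ}
    (S : Set (EuclideanSpace ℝ (Fin d)))
    (hne : S.Nonempty) (hcomp : IsCompact S)
    (c w : EuclideanSpace ℝ (Fin d)) (hw : w ∈ S)
    (a b : EuclideanSpace ℝ (Fin d)) :
    spoPlus S a c w - spoPlus S b c w ≤ 2 * Metric.diam S * ‖a - b‖ := by
  have hconta : Continuous fun x : EuclideanSpace ℝ (Fin d) => ⟪c - (2:ℝ) • a, x⟫ :=
    continuous_const.inner continuous_id
  have hcontb : Continuous fun x : EuclideanSpace ℝ (Fin d) => ⟪c - (2:ℝ) • b, x⟫ :=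
    continuous_const.inner continuous_id
  obtain ⟨w₁, hw₁, hmax⟩ := hcomp.exists_isMaxOn hne hconta.continuousOn
  have h1 : supp S (c - (2:ℝ) • a) ≤ ⟪c - (2:ℝ) • a, w₁⟫ :=
    csSup_le (hne.image _) (by rintro _ ⟨x, hx, rfl⟩; exact hmax hx)
  have h2 : ⟪c - (2:ℝ) • b, w₁⟫ ≤ supp S (c - (2:ℝ) • b) :=
    le_csSup (hcomp.image hcontb).bddAbove ⟨w₁, hw₁, rfl⟩
  have hIP : ⟪a - b, w - w₁⟫ ≤ ‖a - b‖ * ‖w - w₁‖ := real_inner_le_norm _ _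
  have hd : ‖w - w₁‖ ≤ Metric.diam S := by
    rw [← dist_eq_norm]; exact Metric.dist_le_diam_of_mem hcomp.isBounded hw hw₁
  have hn : (0:ℝ) ≤ ‖a - b‖ := norm_nonneg _
  have e1 : ⟪c - (2:ℝ) • a, w₁⟫ = ⟪c, w₁⟫ - 2 * ⟪a, w₁⟫ := by
    rw [inner_sub_left, real_inner_smul_left]
  have e2 : ⟪c - (2:ℝ) • b, w₁⟫ = ⟪c, w₁⟫ - 2 * ⟪b, w₁⟫ := by
    rw [inner_sub_left, real_inner_smul_left]
  have e3 : ⟪a - b, w - w₁⟫ = ⟪a, w⟫ - ⟪b, w⟫ - ⟪a, w₁⟫ + ⟪b, w₁⟫ := by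
    rw [inner_sub_left, inner_sub_right, inner_sub_right]; ring
  have hIP2 : ‖a - b‖ * ‖w - w₁‖ ≤ Metric.diam S * ‖a - b‖ := by
    calc ‖a - b‖ * ‖w - w₁‖ ≤ ‖a - b‖ * Metric.diam S := by
            exact mul_le_mul_of_nonneg_left hd hn
      _ = Metric.diam S * ‖a - b‖ := by ring
  simp only [spoPlus]
  rw [e1] at h1
  rw [e2] at h2
  rw [e3] at hIP
  linarith

/-- **Lipschitzness of the SPO+ loss in the prediction argument.**
For a nonempty compact set `S` with diameter `D(S)`, fixed cost `c`, and a fixed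
minimizer `w⋆` of `⟨c, ·⟩` over `S`,
`|ℓ_S(ĉ₁, c) − ℓ_S(ĉ₂, c)| ≤ 2 D(S) ‖ĉ₁ − ĉ₂‖`. -/
theorem spoPlus_lipschitz_in_prediction {d : ℕ}
    (S : Set (EuclideanSpace ℝ (Fin d)))
    (hne : S.Nonempty) (hcomp : IsCompact S)
    (c : EuclideanSpace ℝ (Fin d))
    (wstar : EuclideanSpace ℝ (Fin d)) (hwmem : wstar ∈ S)
    (hwmin : ∀ w ∈ S, ⟪c, wstar⟫ ≤ ⟪c, w⟫)
    (chat₁ chat₂ : EuclideanSpace ℝ (Fin d)) :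
    |spoPlus S chat₁ c wstar - spoPlus S chat₂ c wstar| ≤
      2 * Metric.diam S * ‖chat₁ - chat₂‖ := by
  rw [abs_sub_le_iff]
  constructor
  · exact spoPlus_one_side S hne hcomp c wstar hwmem chat₁ chat₂
  · have := spoPlus_one_side S hne hcomp c wstar hwmem chat₂ chat₁
    rwa [norm_sub_rev] at this
end

section
/- From estimation error to SPO+ risk gap: let (Ω, μ) be a probability space, let S ⊆ ℝ^d be a nonempty compact set with diameter D(S), let C : Ω → ℝ^d and ĉ, c⋆ : Ω → ℝ^d be measurable, and for each ω let w⋆(ω) ∈ S be a minimizer of ⟨C(ω), ·⟩ over S, used in all loss evaluations. Assume ω ↦ ℓ_S(ĉ(ω), C(ω)), ω ↦ ℓ_S(c⋆(ω), C(ω)), ω ↦ ‖ĉ(ω) − c⋆(ω)‖, and ω ↦ ‖ĉ(ω) − c⋆(ω)‖² are integrable. Then ∫ ℓ_S(ĉ(ω), C(ω)) dμ − ∫ ℓ_S(c⋆(ω), C(ω)) dμ ≤ 2 D(S) · ∫ ‖ĉ(ω) − c⋆(ω)‖ dμ ≤ 2 D(S) · √( ∫ ‖ĉ(ω) − c⋆(ω)‖²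 dμ ). -/
open scoped RealInnerProductSpace
open MeasureTheory

/-- Pointwise bound: the SPO+ loss gap is at most `2 D(S) ‖ĉ - c⋆‖`. -/
lemma spoPlus_gap_le {d : ℕ} {S : Set (EuclideanSpace ℝ (Fin d))}
    (hne : S.Nonempty) (hcomp : IsCompact S)
    (c chat cstar w : EuclideanSpace ℝ (Fin d)) (hw : w ∈ S) :
    spoPlus S chat c w - spoPlus S cstar c w ≤
      2 * Metric.diam S * ‖chat - cstar‖ := by
  have hcont : ∀ u : EuclideanSpace ℝ (Fin d),
      Continuous fun w : EuclideanSpace ℝ (Fin d) => ⟪u, w⟫ := fun u =>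
    continuous_const.inner continuous_id
  obtain ⟨wu, hwuS, hwu⟩ :=
    hcomp.exists_isMaxOn hne ((hcont (c - (2 : ℝ) • chat)).continuousOn)
  have hbdd : BddAbove ((fun w => ⟪c - (2 : ℝ) • cstar, w⟫) '' S) :=
    ((hcomp.image (hcont (c - (2 : ℝ) • cstar))).isBounded).bddAbove
  have h1 : supp S (c - (2 : ℝ) • chat) ≤ ⟪c - (2 : ℝ) • chat, wu⟫ := by
    apply csSup_le (hne.image _)
    rintro x ⟨y, hyS, rfl⟩
    exact hwu hyS
  have h2 : ⟪c - (2 : ℝ) • cstar, wu⟫ ≤ supp S (c - (2 : ℝ) • cstar) :=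
    le_csSup hbdd ⟨wu, hwuS, rfl⟩
  have key : spoPlus S chat c w - spoPlus S cstar c w ≤
      2 * ⟪chat - cstar, w - wu⟫ := by
    simp only [spoPlus]
    have expand : ⟪c - (2:ℝ) • chat, wu⟫ - ⟪c - (2:ℝ) • cstar, wu⟫
        + 2 * ⟪chat, w⟫ - 2 * ⟪cstar, w⟫ = 2 * ⟪chat - cstar, w - wu⟫ := by
      simp only [inner_sub_left, inner_sub_right, real_inner_smul_left]
      ring
    nlinarith [h1, h2]
  have hip : ⟪chat - cstar, w - wu⟫ ≤ ‖chat - cstar‖ * ‖w - wu‖ :=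
    real_inner_le_norm _ _
  have hd : ‖w - wu‖ ≤ Metric.diam S := by
    rw [← dist_eq_norm]
    exact Metric.dist_le_diam_of_mem hcomp.isBounded hw hwuS
  have hn : (0:ℝ) ≤ ‖chat - cstar‖ := norm_nonneg _
  nlinarith [key, hip, hd, hn]

/-- **From estimation error to SPO+ risk gap.**
The expected SPO+ risk gap between predictions `ĉ` and `c⋆` is bounded by
`2 D(S)` times the mean estimation error, which in turn is bounded by
`2 D(S)` times the root mean squared estimation error. -/
theorem estimation_to_spoPlus_risk_gap {d : ℕ}
    (Ω : Type*) [MeasurableSpace Ω] (μ : Measure Ω) [IsProbabilityMeasure μ]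
    (S : Set (EuclideanSpace ℝ (Fin d)))
    (hne : S.Nonempty) (hcomp : IsCompact S)
    (C chat cstar : Ω → EuclideanSpace ℝ (Fin d))
    (hC : Measurable C) (hchat : Measurable chat) (hcstar : Measurable cstar)
    (wstar : Ω → EuclideanSpace ℝ (Fin d))
    (hwmem : ∀ ω, wstar ω ∈ S)
    (hwmin : ∀ ω, ∀ w ∈ S, ⟪C ω, wstar ω⟫ ≤ ⟪C ω, w⟫)
    (hInt₁ : Integrable (fun ω => spoPlus S (chat ω) (C ω) (wstar ω)) μ)
    (hInt₂ : Integrable (fun ω => spoPlus S (cstar ω) (C ω) (wstar ω)) μ)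
    (hInt₃ : Integrable (fun ω => ‖chat ω - cstar ω‖) μ)
    (hInt₄ : Integrable (fun ω => ‖chat ω - cstar ω‖ ^ 2) μ) :
    ((∫ ω, spoPlus S (chat ω) (C ω) (wstar ω) ∂μ) -
        ∫ ω, spoPlus S (cstar ω) (C ω) (wstar ω) ∂μ ≤
      2 * Metric.diam S * ∫ ω, ‖chat ω - cstar ω‖ ∂μ) ∧
    (2 * Metric.diam S * ∫ ω, ‖chat ω - cstar ω‖ ∂μ ≤
      2 * Metric.diam S * Real.sqrt (∫ ω, ‖chat ω - cstar ω‖ ^ 2 ∂μ)) := by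
  constructor
  · have hpt : ∀ ω, spoPlus S (chat ω) (C ω) (wstar ω)
        - spoPlus S (cstar ω) (C ω) (wstar ω)
        ≤ 2 * Metric.diam S * ‖chat ω - cstar ω‖ := fun ω =>
      spoPlus_gap_le hne hcomp (C ω) (chat ω) (cstar ω) (wstar ω) (hwmem ω)
    calc (∫ ω, spoPlus S (chat ω) (C ω) (wstar ω) ∂μ) -
          ∫ ω, spoPlus S (cstar ω) (C ω) (wstar ω) ∂μ
        = ∫ ω, spoPlus S (chat ω) (C ω) (wstar ω)
            - spoPlus S (cstar ω) (C ω) (wstar ω) ∂μ :=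
          (integral_sub hInt₁ hInt₂).symm
      _ ≤ ∫ ω, 2 * Metric.diam S * ‖chat ω - cstar ω‖ ∂μ :=
          integral_mono (hInt₁.sub hInt₂)
            (hInt₃.const_mul (2 * Metric.diam S)) (fun ω => hpt ω)
      _ = 2 * Metric.diam S * ∫ ω, ‖chat ω - cstar ω‖ ∂μ := integral_const_mul _ _
  · have hDnn : (0:ℝ) ≤ 2 * Metric.diam S := by positivity
    refine mul_le_mul_of_nonneg_left ?_ hDnn
    set f : Ω → ℝ := fun ω => ‖chat ω - cstar ω‖ with hf
    have hmeas : AEStronglyMeasurable f μ :=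
      ((hchat.sub hcstar).norm).aestronglyMeasurable
    have hmem2 : MemLp f 2 μ :=
      (memLp_two_iff_integrable_sq hmeas).2 hInt₄
    have hmem1 : MemLp (fun _ : Ω => (1:ℝ)) 2 μ := memLp_const 1
    have hpq : Real.HolderConjugate 2 2 := by
      constructor <;> norm_num
    have h := integral_mul_le_Lp_mul_Lq_of_nonneg hpq
      (f := f) (g := fun _ => (1:ℝ))
      (Filter.Eventually.of_forall fun ω => norm_nonneg _)
      (Filter.Eventually.of_forall fun _ => zero_le_one)
      (by simpa using hmem2) (by simpa using hmem1)
    simp only [mul_one, Real.one_rpow, integral_const, measure_univ,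
      ENNReal.toReal_one, smul_eq_mul, one_mul, probReal_univ] at h
    have heq : (∫ ω, f ω ^ (2:ℝ) ∂μ) = ∫ ω, ‖chat ω - cstar ω‖ ^ 2 ∂μ := by
      refine integral_congr_ae (Filter.Eventually.of_forall fun ω => ?_)
      show f ω ^ (2:ℝ) = ‖chat ω - cstar ω‖ ^ 2
      rw [show ((2:ℝ)) = ((2:ℕ):ℝ) by norm_num, Real.rpow_natCast]
    rw [heq] at h
    calc ∫ ω, ‖chat ω - cstar ω‖ ∂μ
        ≤ (∫ ω, ‖chat ω - cstar ω‖ ^ 2 ∂μ) ^ (1/(2:ℝ)) := h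
      _ = Real.sqrt (∫ ω, ‖chat ω - cstar ω‖ ^ 2 ∂μ) :=
          (Real.sqrt_eq_rpow _).symm
end
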